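/- arXiv:2503.06957 — 4 statements merged into one kernel-verified Lean document; each statement's English description precedes it below -/
import Mathlib

section
/- Let K : ℤ → ℂ be positive definite, let c₀ ∈ ℂ satisfy Re c₀ ≥ −K(0)/2, and set c₀′ = c₀ − 2 Re c₀ − K(0) and K′(n) = K(n) + δ(n)(2 Re c₀ + K(0)), where δ is the discrete delta function; then K′ is positive definite and Re c₀′ = −K′(0)/2. Assume K′ is not identically zero, let λ = 𝓕^{−1}[K′] ∈ 𝓜₊(S¹), write (μ, ζ₀′) = 𝓑[λ, 2 Im c₀′], set J = 4𝓕[μ] and ζ₀ = 2i ζ₀′ − J(0)/2. Then for any sequences x, y : ℕ → ℂ satisfying y(n) = c₀ x(n) + Σ_{j=0}^{n} K(n−j) x(j) for all n, one has x(n) = ζ₀ y(n) + Σ_{j=0}^{n} J(n−j) y(j) for all n. -/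
/-!
Statement 2: solution of discrete-time positive definite Volterra equations.  Given a positive
definite kernel `K : ℤ → ℂ` and `c₀ ∈ ℂ` with `Re c₀ ≥ −K(0)/2`, setting
`c₀′ = c₀ − 2 Re c₀ − K(0)` and `K′(n) = K(n) + δ(n)(2 Re c₀ + K(0))`, the kernel `K′` is
positive definite with `Re c₀′ = −K′(0)/2`; and if `λ = 𝓕⁻¹[K′]`, `(μ, ζ₀′) = 𝓑[λ, 2 Im c₀′]`,
`J = 4 𝓕[μ]`, `ζ₀ = 2i ζ₀′ − J(0)/2`, then any solution of
`y(n) = c₀ x(n) + Σ_{j≤n} K(n−j)x(j)` satisfies `x(n) = ζ₀ y(n) + Σ_{j≤n} J(n−j) y(j)`.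
-/

open MeasureTheory Complex Filter Metric Set
open scoped ENNReal

noncomputable section

instance : MeasurableSpace Circle := borel Circle
instance : BorelSpace Circle := ⟨rfl⟩

/-- Positive definiteness of a kernel `K : ℤ → ℂ`: every matrix `(K(n_j − n_k))_{j,k}` is
positive semidefinite. -/
def PosDefKernel (K : ℤ → ℂ) : Prop :=
  ∀ (N : ℕ) (t : Fin N → ℤ) (c : Fin N → ℂ),
    0 ≤ (∑ j, ∑ k, (starRingEnd ℂ) (c j) * c k * K (t j - t k)).re ∧
    (∑ j, ∑ k, (starRingEnd ℂ) (c j) * c k * K (t j - t k)).im = 0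

/-- Cauchy transform of a measure on the circle. -/
noncomputable def cauchyT (μ : Measure Circle) (z : ℂ) : ℂ :=
  ∫ w : Circle, (1 + (starRingEnd ℂ) (w : ℂ) * z) / (1 - (starRingEnd ℂ) (w : ℂ) * z) ∂μ

/-- σ-Cauchy transform. -/
noncomputable def cauchyTσ (μ : Measure Circle) (σ : ℝ) (z : ℂ) : ℂ := cauchyT μ z + σ * I

/-- Discrete Fourier transform of a measure on the circle:
`𝓕[μ](n) = ∫₀^{2π} e^{−inθ} dμ(θ) = ∫ w^{−n} dμ(w)`. -/
noncomputable def fourierC (μ : Measure Circle) (n : ℤ) : ℂ :=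
  ∫ w : Circle, ((w ^ (-n) : Circle) : ℂ) ∂μ

/-! ### Auxiliary lemmas -/

lemma circle_cont (m : ℤ) : Continuous fun w : Circle => ((w ^ m : Circle) : ℂ) :=
  continuous_subtype_val.comp (continuous_zpow m)

lemma circle_integrable {f : Circle → ℂ} (hf : Continuous f) (μ : Measure Circle)
    [IsFiniteMeasure μ] : Integrable f μ :=
  hf.integrable_of_hasCompactSupport (isClosed_tsupport f).isCompact

lemma norm_circle (w : Circle) : ‖(w : ℂ)‖ = 1 := Circle.norm_coe w

lemma conj_pow_eq (w : Circle) (n : ℕ) :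
    ((starRingEnd ℂ) (w : ℂ)) ^ n = ((w ^ (-(n : ℤ)) : Circle) : ℂ) := by
  rw [← Circle.coe_inv_eq_conj, zpow_neg, zpow_natCast, ← inv_pow]
  exact (map_pow Circle.coeHom w⁻¹ n).symm

lemma fourierC_norm_le (μ : Measure Circle) [IsFiniteMeasure μ] (n : ℤ) :
    ‖fourierC μ n‖ ≤ (μ Set.univ).toReal := by
  have := norm_integral_le_of_norm_le_const (μ := μ)
    (f := fun w : Circle => ((w ^ (-n) : Circle) : ℂ)) (C := 1)
    (Filter.Eventually.of_forall fun w => by rw [norm_circle])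
  simpa [fourierC, measureReal_def] using this

lemma fourierC_zero (μ : Measure Circle) [IsFiniteMeasure μ] :
    fourierC μ 0 = ((μ Set.univ).toReal : ℂ) := by
  simp [fourierC, integral_const, measureReal_def]

lemma cauchy_series (μ : Measure Circle) [IsFiniteMeasure μ] {z : ℂ} (hz : ‖z‖ < 1) :
    cauchyT μ z = -fourierC μ 0 + 2 * ∑' n : ℕ, fourierC μ n * z ^ n := by
  have hu : ∀ w : Circle, ‖(starRingEnd ℂ) (w : ℂ) * z‖ < 1 := fun w => by
    rw [norm_mul, RCLike.norm_conj, norm_circle, one_mul]; exact hz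
  have hne : ∀ w : Circle, (1 : ℂ) - (starRingEnd ℂ) (w : ℂ) * z ≠ 0 := fun w => by
    intro h
    have h2 : (starRingEnd ℂ) (w : ℂ) * z = 1 := by linear_combination -h
    have h3 := hu w
    rw [h2] at h3
    simp at h3
  have key : ∀ w : Circle, (1 + (starRingEnd ℂ) (w : ℂ) * z) / (1 - (starRingEnd ℂ) (w : ℂ) * z)
      = -1 + 2 * (1 - (starRingEnd ℂ) (w : ℂ) * z)⁻¹ := fun w => by
    field_simp [hne w]; ring
  have hcont : Continuous fun w : Circle => ((1 : ℂ) - (starRingEnd ℂ) (w : ℂ) * z)⁻¹ := by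
    refine Continuous.inv₀ ?_ hne
    exact continuous_const.sub
      ((Complex.continuous_conj.comp continuous_subtype_val).mul continuous_const)
  have hint : Integrable (fun w : Circle => ((1 : ℂ) - (starRingEnd ℂ) (w : ℂ) * z)⁻¹) μ :=
    circle_integrable hcont μ
  have step1 : cauchyT μ z = -((μ Set.univ).toReal : ℂ)
      + 2 * ∫ w : Circle, ((1 : ℂ) - (starRingEnd ℂ) (w : ℂ) * z)⁻¹ ∂μ := by
    rw [cauchyT]
    calc ∫ w : Circle, (1 + (starRingEnd ℂ) (w : ℂ) * z) / (1 - (starRingEnd ℂ) (w : ℂ) * z) ∂μ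
        = ∫ w : Circle, (-1 + 2 * ((1 : ℂ) - (starRingEnd ℂ) (w : ℂ) * z)⁻¹) ∂μ :=
          integral_congr_ae (Filter.Eventually.of_forall fun w => key w)
      _ = -((μ Set.univ).toReal : ℂ)
          + 2 * ∫ w : Circle, ((1 : ℂ) - (starRingEnd ℂ) (w : ℂ) * z)⁻¹ ∂μ := by
          rw [integral_add (integrable_const _) (hint.const_mul 2), integral_const,
            integral_const_mul]
          simp [measureReal_def]
  have geo : ∀ w : Circle, ((1 : ℂ) - (starRingEnd ℂ) (w : ℂ) * z)⁻¹
      = ∑' n : ℕ, ((starRingEnd ℂ) (w : ℂ)) ^ n * z ^ n := by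
    intro w
    rw [← tsum_geometric_of_norm_lt_one (hu w)]
    exact tsum_congr fun n => mul_pow _ _ n
  have swap : ∫ w : Circle, (∑' n : ℕ, ((starRingEnd ℂ) (w : ℂ)) ^ n * z ^ n) ∂μ
      = ∑' n : ℕ, ∫ w : Circle, ((starRingEnd ℂ) (w : ℂ)) ^ n * z ^ n ∂μ := by
    refine integral_tsum (fun n => ?_) ?_
    · refine Continuous.aestronglyMeasurable ?_
      exact ((Complex.continuous_conj.comp continuous_subtype_val).pow n).mul continuous_const
    · have hb : ∀ n : ℕ, (∫⁻ w : Circle, ‖((starRingEnd ℂ) (w : ℂ)) ^ n * z ^ n‖ₑ ∂μ)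
          = (‖z‖₊ : ℝ≥0∞) ^ n * μ Set.univ := by
        intro n
        have hnn : ∀ w : Circle, (‖((starRingEnd ℂ) (w : ℂ)) ^ n * z ^ n‖ₑ : ℝ≥0∞)
            = (‖z‖₊ : ℝ≥0∞) ^ n := by
          intro w
          rw [enorm_eq_nnnorm, ← ENNReal.coe_pow, ENNReal.coe_inj]
          apply NNReal.eq
          simp [norm_mul, norm_pow, RCLike.norm_conj, norm_circle]
        simp_rw [hnn]
        rw [lintegral_const]
      simp_rw [hb]
      rw [ENNReal.tsum_mul_right, ENNReal.tsum_geometric]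
      have hz' : (‖z‖₊ : ℝ≥0∞) < 1 := by
        rw [← ENNReal.coe_one, ENNReal.coe_lt_coe]
        exact_mod_cast hz
      intro h
      have h1 : ((1 : ℝ≥0∞) - ‖z‖₊)⁻¹ ≠ ⊤ := by
        rw [ENNReal.inv_ne_top, ne_eq, tsub_eq_zero_iff_le, not_le]
        exact hz'
      exact (ENNReal.mul_eq_top.mp h).elim (fun ⟨_, h2⟩ => (measure_ne_top μ _) h2)
        (fun ⟨h2, _⟩ => h1 h2)
  have term : ∀ n : ℕ, ∫ w : Circle, ((starRingEnd ℂ) (w : ℂ)) ^ n * z ^ n ∂μ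
      = fourierC μ n * z ^ n := by
    intro n
    rw [integral_mul_const, fourierC]
    congr 1
    exact integral_congr_ae (Filter.Eventually.of_forall fun w => conj_pow_eq w n)
  have final : ∫ w : Circle, ((1 : ℂ) - (starRingEnd ℂ) (w : ℂ) * z)⁻¹ ∂μ
      = ∑' n : ℕ, fourierC μ n * z ^ n := by
    rw [integral_congr_ae (Filter.Eventually.of_forall fun w => geo w), swap]
    exact tsum_congr term
  rw [step1, final, fourierC_zero]

lemma summ_norm_aux {d : ℕ → ℂ} {D : ℝ} (hD : ∀ n, ‖d n‖ ≤ D * (n + 1)) {z : ℂ}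
    (hz : ‖z‖ < 1) : Summable fun n => ‖d n * z ^ n‖ := by
  have h1 : Summable (fun n : ℕ => (n : ℝ) * ‖z‖ ^ n + ‖z‖ ^ n) := by
    have := summable_pow_mul_geometric_of_norm_lt_one (R := ℝ) 1
      (r := ‖z‖) (by rwa [Real.norm_eq_abs, _root_.abs_of_nonneg (norm_nonneg z)])
    simp only [pow_one] at this
    exact this.add (summable_geometric_of_lt_one (norm_nonneg z) hz)
  refine Summable.of_nonneg_of_le (fun n => norm_nonneg _) (fun n => ?_) (h1.mul_left D)
  rw [norm_mul, norm_pow]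
  calc ‖d n‖ * ‖z‖ ^ n ≤ (D * (n + 1)) * ‖z‖ ^ n :=
        mul_le_mul_of_nonneg_right (hD n) (pow_nonneg (norm_nonneg z) n)
    _ = D * ((n : ℝ) * ‖z‖ ^ n + ‖z‖ ^ n) := by ring

lemma summ_aux {d : ℕ → ℂ} {D : ℝ} (hD : ∀ n, ‖d n‖ ≤ D * (n + 1)) {z : ℂ}
    (hz : ‖z‖ < 1) : Summable fun n => d n * z ^ n :=
  (summ_norm_aux hD hz).of_norm

lemma head_split {d : ℕ → ℂ} {z : ℂ} (hd : Summable fun n => d n * z ^ n) :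
    ∑' n, d n * z ^ n = d 0 + z * ∑' n, d (n + 1) * z ^ n := by
  rw [hd.tsum_eq_zero_add]
  simp only [pow_zero, mul_one]
  congr 1
  rw [← tsum_mul_left]
  exact tsum_congr fun n => by rw [pow_succ]; ring

/-- Uniqueness of power series coefficients, elementary version. -/
lemma coeff_unique {c : ℕ → ℂ} {C : ℝ} (hb : ∀ n, ‖c n‖ ≤ C * (n + 1))
    (h : ∀ z : ℂ, ‖z‖ < 1 → ∑' n, c n * z ^ n = 1) :
    ∀ n, c n = if n = 0 then 1 else 0 := by
  have hC : 0 ≤ C := by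
    have := (norm_nonneg (c 0)).trans (hb 0)
    nlinarith
  have hshift : ∀ m : ℕ, ∀ n : ℕ, ‖c (n + m)‖ ≤ (C * (m + 1)) * (n + 1) := by
    intro m n
    have h1 := hb (n + m)
    push_cast at h1 ⊢
    nlinarith [mul_nonneg (mul_nonneg hC (Nat.cast_nonneg m)) (Nat.cast_nonneg n)]
  have main : ∀ m : ℕ, ∀ z : ℂ, ‖z‖ < 2⁻¹ →
      ∑' n, c (n + m) * z ^ n = (if m = 0 then 1 else 0) := by
    intro m
    induction m with
    | zero =>
      intro z hz
      simpa using h z (hz.trans (by norm_num))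
    | succ m ih =>
      have hcm : c m = (if m = 0 then 1 else 0) := by
        have := ih 0 (by rw [norm_zero]; norm_num)
        rw [tsum_eq_single 0 (fun n hn => by simp [zero_pow hn])] at this
        simpa using this
      have hzero : ∀ z : ℂ, ‖z‖ < 2⁻¹ → z ≠ 0 → ∑' n, c (n + (m + 1)) * z ^ n = 0 := by
        intro z hz hz0
        have hsum : Summable fun n => c (n + m) * z ^ n :=
          summ_aux (hshift m) (hz.trans (by norm_num))
        have hsplit := head_split hsum
        have h2 : ∀ n : ℕ, c (n + 1 + m) = c (n + (m + 1)) := fun n => by ring_nf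
        simp only [h2, zero_add] at hsplit
        rw [ih z hz, hcm] at hsplit
        have key : z * ∑' n, c (n + (m + 1)) * z ^ n = 0 := by
          linear_combination -hsplit
        exact (mul_eq_zero.mp key).resolve_left hz0
      intro z hz
      rcases eq_or_ne z 0 with rfl | hz0
      · rw [tsum_eq_single 0 (fun n hn => by simp [zero_pow hn])]
        simp only [pow_zero, mul_one, zero_add, if_neg (Nat.succ_ne_zero m)]
        set M : ℝ := ∑' n : ℕ, (C * (m + 3)) * ((n + 1) * (2⁻¹ : ℝ) ^ n) with hM
        have hMsum : Summable (fun n : ℕ => (C * (m + 3)) * ((n + 1) * (2⁻¹ : ℝ) ^ n)) := by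
          have h1 : Summable (fun n : ℕ => (n : ℝ) * (2⁻¹ : ℝ) ^ n + (2⁻¹ : ℝ) ^ n) := by
            have := summable_pow_mul_geometric_of_norm_lt_one (R := ℝ) 1
              (r := (2⁻¹ : ℝ)) (by rw [Real.norm_eq_abs, _root_.abs_of_nonneg] <;> norm_num)
            simp only [pow_one] at this
            exact this.add (summable_geometric_of_lt_one (by norm_num) (by norm_num))
          exact Summable.congr (h1.mul_left (C * (m + 3))) fun n => by ring
        have hMnn : 0 ≤ M := tsum_nonneg fun n => by positivity
        have hest : ∀ t : ℂ, 0 < ‖t‖ → ‖t‖ < 2⁻¹ → ‖c (m + 1)‖ ≤ ‖t‖ * M := by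
          intro t ht0 ht
          have ht1 : ‖t‖ < 1 := ht.trans (by norm_num)
          have hsum1 : Summable fun n => c (n + (m + 1)) * t ^ n :=
            summ_aux (hshift (m + 1)) ht1
          have hsplit := head_split hsum1
          rw [hzero t ht (norm_pos_iff.mp ht0)] at hsplit
          have h2 : ∀ n : ℕ, c (n + 1 + (m + 1)) = c (n + (m + 2)) := fun n => by ring_nf
          simp only [h2, zero_add] at hsplit
          have hval : c (m + 1) = -(t * ∑' n, c (n + (m + 2)) * t ^ n) := by
            linear_combination -hsplit
          rw [hval, norm_neg, norm_mul]
          apply mul_le_mul_of_nonneg_left _ (norm_nonneg t)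
          have hsum2 : Summable fun n => ‖c (n + (m + 2)) * t ^ n‖ :=
            summ_norm_aux (hshift (m + 2)) ht1
          calc ‖∑' n, c (n + (m + 2)) * t ^ n‖ ≤ ∑' n, ‖c (n + (m + 2)) * t ^ n‖ :=
                norm_tsum_le_tsum_norm hsum2
            _ ≤ M := by
                refine Summable.tsum_le_tsum (fun n => ?_) hsum2 hMsum
                rw [norm_mul, norm_pow]
                have hsh := hshift (m + 2) n
                push_cast at hsh
                calc ‖c (n + (m + 2))‖ * ‖t‖ ^ n
                    ≤ ((C * (↑m + 2 + 1)) * (↑n + 1)) * (2⁻¹ : ℝ) ^ n := by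
                      apply mul_le_mul hsh (pow_le_pow_left₀ (norm_nonneg t) ht.le n)
                        (pow_nonneg (norm_nonneg t) n) (by positivity)
                  _ = (C * (↑m + 3)) * ((↑n + 1) * (2⁻¹ : ℝ) ^ n) := by ring
        by_contra hne
        have hpos : 0 < ‖c (m + 1)‖ := norm_pos_iff.mpr hne
        set ε : ℝ := min 4⁻¹ (‖c (m + 1)‖ / (2 * (M + 1))) with hε
        have hε0 : 0 < ε := lt_min (by norm_num) (div_pos hpos (by positivity))
        have hε2 : ε < 2⁻¹ := lt_of_le_of_lt (min_le_left _ _) (by norm_num)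
        have hεnorm : ‖(ε : ℂ)‖ = ε := by
          rw [Complex.norm_real, Real.norm_eq_abs, abs_of_pos hε0]
        have hle := hest (ε : ℂ) (by rw [hεnorm]; exact hε0) (by rw [hεnorm]; exact hε2)
        rw [hεnorm] at hle
        have hεle : ε ≤ ‖c (m + 1)‖ / (2 * (M + 1)) := min_le_right _ _
        have h4 : ‖c (m + 1)‖ ≤ ‖c (m + 1)‖ / (2 * (M + 1)) * M :=
          hle.trans (mul_le_mul_of_nonneg_right hεle hMnn)
        have h5 : ‖c (m + 1)‖ / (2 * (M + 1)) * M < ‖c (m + 1)‖ := by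
          rw [div_mul_eq_mul_div, div_lt_iff₀ (by positivity : (0:ℝ) < 2 * (M + 1))]
          nlinarith
        linarith
      · exact (hzero z hz hz0).trans (by rw [if_neg (Nat.succ_ne_zero m)])
  intro n
  have := main n 0 (by rw [norm_zero]; norm_num)
  rw [tsum_eq_single 0 (fun k hk => by simp [zero_pow hk])] at this
  simpa using this

lemma split_sum (W : ℤ → ℂ) (q : ℂ) (u : ℕ → ℂ) (n : ℕ) :
    ∑ j ∈ Finset.range (n + 1),
        ((if ((n : ℤ) - (j : ℤ)) = 0 then q else 0) + W ((n : ℤ) - (j : ℤ))) * u j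
      = q * u n + ∑ j ∈ Finset.range (n + 1), W ((n : ℤ) - (j : ℤ)) * u j := by
  simp only [add_mul, Finset.sum_add_distrib]
  congr 1
  have h1 : ∀ j ∈ Finset.range (n + 1),
      (if ((n : ℤ) - (j : ℤ)) = 0 then q else 0) * u j = if j = n then q * u j else 0 := by
    intro j hj
    rw [Finset.mem_range] at hj
    by_cases h : j = n
    · subst h; simp
    · rw [if_neg h, if_neg (by omega), zero_mul]
  rw [Finset.sum_congr rfl h1, Finset.sum_ite_eq' (Finset.range (n + 1)) n (fun j => q * u j),
    if_pos (Finset.self_mem_range_succ n)]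

lemma conv_inv (A B : ℤ → ℂ) (x y : ℕ → ℂ)
    (hconv : ∀ n : ℕ, ∑ k ∈ Finset.range (n + 1), A (k : ℤ) * B ((n : ℤ) - (k : ℤ))
      = if n = 0 then 1 else 0)
    (hy : ∀ n : ℕ, y n = ∑ j ∈ Finset.range (n + 1), A ((n : ℤ) - (j : ℤ)) * x j) :
    ∀ n : ℕ, ∑ j ∈ Finset.range (n + 1), B ((n : ℤ) - (j : ℤ)) * y j = x n := by
  intro n
  calc ∑ j ∈ Finset.range (n + 1), B ((n : ℤ) - (j : ℤ)) * y j
      = ∑ j ∈ Finset.range (n + 1), ∑ k ∈ Finset.range (j + 1),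
          B ((n : ℤ) - (j : ℤ)) * (A ((j : ℤ) - (k : ℤ)) * x k) :=
        Finset.sum_congr rfl fun j hj => by rw [hy j, Finset.mul_sum]
    _ = ∑ k ∈ Finset.range (n + 1), ∑ j ∈ Finset.Ico k (n + 1),
          B ((n : ℤ) - (j : ℤ)) * (A ((j : ℤ) - (k : ℤ)) * x k) := by
        refine Finset.sum_comm' fun j k => ?_
        simp only [Finset.mem_range, Finset.mem_Ico]
        omega
    _ = ∑ k ∈ Finset.range (n + 1),
          (∑ i ∈ Finset.range (n + 1 - k), A (i : ℤ) * B ((n : ℤ) - (k : ℤ) - (i : ℤ))) * x k := by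
        refine Finset.sum_congr rfl fun k hk => ?_
        rw [Finset.sum_Ico_eq_sum_range, Finset.sum_mul]
        refine Finset.sum_congr rfl fun i hi => ?_
        push_cast
        ring_nf
    _ = ∑ k ∈ Finset.range (n + 1), (if n - k = 0 then (1 : ℂ) else 0) * x k := by
        refine Finset.sum_congr rfl fun k hk => ?_
        rw [Finset.mem_range] at hk
        have hk' : k ≤ n := by omega
        have h1 : n + 1 - k = (n - k) + 1 := by omega
        have h2 : ∀ i : ℤ, (n : ℤ) - (k : ℤ) - i = ((n - k : ℕ) : ℤ) - i := by
          intro i; push_cast [Nat.cast_sub hk']; ring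
        rw [h1]
        congr 1
        calc ∑ i ∈ Finset.range ((n - k) + 1), A (i : ℤ) * B ((n : ℤ) - (k : ℤ) - (i : ℤ))
            = ∑ i ∈ Finset.range ((n - k) + 1), A (i : ℤ) * B (((n - k : ℕ) : ℤ) - (i : ℤ)) :=
              Finset.sum_congr rfl fun i _ => by rw [h2]
          _ = if n - k = 0 then 1 else 0 := hconv (n - k)
    _ = x n := by
        have h1 : ∀ k ∈ Finset.range (n + 1),
            (if n - k = 0 then (1 : ℂ) else 0) * x k = if k = n then x k else 0 := by
          intro k hk
          rw [Finset.mem_range] at hk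
          by_cases h : k = n
          · subst h; simp
          · rw [if_neg (by omega), if_neg h, zero_mul]
        rw [Finset.sum_congr rfl h1, Finset.sum_ite_eq' (Finset.range (n + 1)) n (fun k => x k),
          if_pos (Finset.self_mem_range_succ n)]

lemma posdef_of_fourier (μ : Measure Circle) [IsFiniteMeasure μ] (K' : ℤ → ℂ)
    (hFour : ∀ n : ℤ, K' n = fourierC μ n) : PosDefKernel K' := by
  intro N t c
  set S : Circle → ℂ := fun w => ∑ j, c j * ((w ^ (t j) : Circle) : ℂ) with hS
  have hScont : Continuous S := by
    apply continuous_finset_sum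
    exact fun j _ => continuous_const.mul (circle_cont (t j))
  have hpt : ∀ w : Circle, (starRingEnd ℂ) (S w) * S w
      = ∑ j, ∑ k, (starRingEnd ℂ) (c j) * c k * ((w ^ (t k - t j) : Circle) : ℂ) := by
    intro w
    have hconjS : (starRingEnd ℂ) (S w)
        = ∑ j, (starRingEnd ℂ) (c j) * ((w ^ (-(t j)) : Circle) : ℂ) := by
      rw [hS, map_sum]
      refine Finset.sum_congr rfl fun j _ => ?_
      rw [map_mul, ← Circle.coe_inv_eq_conj, ← zpow_neg]
    rw [hconjS, hS, Finset.sum_mul_sum]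
    refine Finset.sum_congr rfl fun j _ => Finset.sum_congr rfl fun k _ => ?_
    have : ((w ^ (-(t j)) : Circle) : ℂ) * ((w ^ (t k) : Circle) : ℂ)
        = ((w ^ (t k - t j) : Circle) : ℂ) := by
      rw [← Circle.coe_mul, ← zpow_add]
      congr 2
      ring
    calc (starRingEnd ℂ) (c j) * ((w ^ (-(t j)) : Circle) : ℂ) * (c k * ((w ^ (t k) : Circle) : ℂ))
        = (starRingEnd ℂ) (c j) * c k
          * (((w ^ (-(t j)) : Circle) : ℂ) * ((w ^ (t k) : Circle) : ℂ)) := by ring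
      _ = (starRingEnd ℂ) (c j) * c k * ((w ^ (t k - t j) : Circle) : ℂ) := by rw [this]
  have hintegr : ∀ (j k : Fin N),
      Integrable (fun w : Circle => (starRingEnd ℂ) (c j) * c k
        * ((w ^ (t k - t j) : Circle) : ℂ)) μ :=
    fun j k => circle_integrable (continuous_const.mul (circle_cont _)) μ
  have hmain : ∑ j, ∑ k, (starRingEnd ℂ) (c j) * c k * K' (t j - t k)
      = ((∫ w : Circle, Complex.normSq (S w) ∂μ : ℝ) : ℂ) := by
    have h0 : ∀ (j k : Fin N), (starRingEnd ℂ) (c j) * c k * K' (t j - t k)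
        = ∫ w : Circle, (starRingEnd ℂ) (c j) * c k * ((w ^ (t k - t j) : Circle) : ℂ) ∂μ := by
      intro j k
      rw [hFour]
      simp only [fourierC, neg_sub]
      rw [← integral_const_mul]
    calc ∑ j, ∑ k, (starRingEnd ℂ) (c j) * c k * K' (t j - t k)
        = ∑ j, ∑ k, ∫ w : Circle,
            (starRingEnd ℂ) (c j) * c k * ((w ^ (t k - t j) : Circle) : ℂ) ∂μ :=
          Finset.sum_congr rfl fun j _ => Finset.sum_congr rfl fun k _ => h0 j k
      _ = ∑ j, ∫ w : Circle, ∑ k,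
            (starRingEnd ℂ) (c j) * c k * ((w ^ (t k - t j) : Circle) : ℂ) ∂μ :=
          Finset.sum_congr rfl fun j _ =>
            (integral_finset_sum Finset.univ fun k _ => hintegr j k).symm
      _ = ∫ w : Circle, ∑ j, ∑ k,
            (starRingEnd ℂ) (c j) * c k * ((w ^ (t k - t j) : Circle) : ℂ) ∂μ :=
          (integral_finset_sum Finset.univ fun j _ =>
            integrable_finset_sum Finset.univ fun k _ => hintegr j k).symm
      _ = ∫ w : Circle, (starRingEnd ℂ) (S w) * S w ∂μ :=
          integral_congr_ae (Filter.Eventually.of_forall fun w => (hpt w).symm)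
      _ = ∫ w : Circle, ((Complex.normSq (S w) : ℝ) : ℂ) ∂μ :=
          integral_congr_ae (Filter.Eventually.of_forall fun w => by
            show (starRingEnd ℂ) (S w) * S w = ((Complex.normSq (S w) : ℝ) : ℂ)
            rw [mul_comm, Complex.mul_conj])
      _ = ((∫ w : Circle, Complex.normSq (S w) ∂μ : ℝ) : ℂ) := integral_ofReal
  constructor
  · rw [hmain, Complex.ofReal_re]
    exact integral_nonneg fun w => Complex.normSq_nonneg _
  · rw [hmain, Complex.ofReal_im]

theorem statement2 (K : ℤ → ℂ) (hK : PosDefKernel K) (c₀ : ℂ) (hc : -(K 0).re / 2 ≤ c₀.re)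
    (c₀' : ℂ) (hc₀' : c₀' = c₀ - 2 * (c₀.re : ℂ) - K 0)
    (K' : ℤ → ℂ)
    (hK'def : ∀ n : ℤ, K' n = K n + (if n = 0 then 2 * (c₀.re : ℂ) + K 0 else 0))
    (lam : Measure Circle) [IsFiniteMeasure lam] (hlam : lam ≠ 0)
    (hFour : ∀ n : ℤ, K' n = fourierC lam n)
    (mu : Measure Circle) [IsFiniteMeasure mu] (hmu : mu ≠ 0) (ζ₀' : ℝ)
    (hB : ∀ z ∈ Metric.ball (0 : ℂ) 1,
      cauchyTσ lam (2 * c₀'.im) z * cauchyTσ mu ζ₀' z = 1)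
    (J : ℤ → ℂ) (hJ : ∀ n : ℤ, J n = 4 * fourierC mu n)
    (ζ₀ : ℂ) (hζ₀ : ζ₀ = 2 * I * (ζ₀' : ℂ) - J 0 / 2) :
    PosDefKernel K' ∧
    (c₀'.re : ℂ) = -(K' 0) / 2 ∧
    ∀ x y : ℕ → ℂ,
      (∀ n : ℕ, y n = c₀ * x n + ∑ j ∈ Finset.range (n + 1), K ((n : ℤ) - (j : ℤ)) * x j) →
      ∀ n : ℕ, x n = ζ₀ * y n + ∑ j ∈ Finset.range (n + 1), J ((n : ℤ) - (j : ℤ)) * y j := by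
  -- basic real-ness facts
  have hK'0 : K' 0 = (((lam Set.univ).toReal : ℝ) : ℂ) := by rw [hFour 0, fourierC_zero]
  have hK0im : (K 0).im = 0 := by
    have h := hK'def 0
    rw [if_pos rfl] at h
    have h1 : (K' 0).im = 2 * (K 0).im := by rw [h]; simp; ring
    have h2 : (K' 0).im = 0 := by rw [hK'0]; simp
    rw [h2] at h1
    linarith
  have hK0 : K 0 = ((K 0).re : ℂ) := by
    apply Complex.ext <;> simp [hK0im]
  refine ⟨posdef_of_fourier lam K' hFour, ?_, ?_⟩
  · -- Re c₀' = -K'(0)/2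
    rw [hK'def 0, if_pos rfl, hc₀']
    have hre : (c₀ - 2 * (c₀.re : ℂ) - K 0).re = -c₀.re - (K 0).re := by
      simp
      ring
    rw [hre, hK0]
    push_cast [Complex.ofReal_re]
    ring
  · -- the Volterra inversion
    intro x y hxy
    set A : ℤ → ℂ := fun m => (if m = 0 then c₀ else 0) + K m with hA
    set B : ℤ → ℂ := fun m => (if m = 0 then ζ₀ else 0) + J m with hBdef
    set Ca : ℝ := ‖c₀‖ + ‖K 0‖ + (lam Set.univ).toReal with hCa
    set Cb : ℝ := ‖ζ₀‖ + 4 * (mu Set.univ).toReal with hCb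
    have hlamnn : 0 ≤ (lam Set.univ).toReal := ENNReal.toReal_nonneg
    have hmunn : 0 ≤ (mu Set.univ).toReal := ENNReal.toReal_nonneg
    have hK'b : ∀ n : ℤ, ‖K' n‖ ≤ (lam Set.univ).toReal := fun n => by
      rw [hFour]; exact fourierC_norm_le lam n
    have hJb : ∀ n : ℤ, ‖J n‖ ≤ 4 * (mu Set.univ).toReal := fun n => by
      rw [hJ, norm_mul]
      have h4 : ‖(4 : ℂ)‖ = 4 := by norm_num
      rw [h4]
      exact mul_le_mul_of_nonneg_left (fourierC_norm_le mu n) (by norm_num)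
    have haB : ∀ n : ℕ, ‖A (n : ℤ)‖ ≤ Ca := by
      intro n
      rcases Nat.eq_zero_or_pos n with rfl | hn
      · simp only [hA, Nat.cast_zero, if_pos rfl]
        calc ‖c₀ + K 0‖ ≤ ‖c₀‖ + ‖K 0‖ := norm_add_le _ _
          _ ≤ Ca := by rw [hCa]; linarith
      · have hne : ((n : ℤ)) ≠ 0 := by exact_mod_cast Nat.pos_iff_ne_zero.mp hn
        have hKn : A (n : ℤ) = K' (n : ℤ) := by
          simp only [hA, hK'def (n : ℤ), if_neg hne]
          simp
        rw [hKn]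
        calc ‖K' (n : ℤ)‖ ≤ (lam Set.univ).toReal := hK'b _
          _ ≤ Ca := by rw [hCa]; nlinarith [norm_nonneg c₀, norm_nonneg (K 0)]
    have hbB : ∀ n : ℕ, ‖B (n : ℤ)‖ ≤ Cb := by
      intro n
      rcases Nat.eq_zero_or_pos n with rfl | hn
      · simp only [hBdef, Nat.cast_zero, if_pos rfl]
        calc ‖ζ₀ + J 0‖ ≤ ‖ζ₀‖ + ‖J 0‖ := norm_add_le _ _
          _ ≤ Cb := by rw [hCb]; linarith [hJb 0]
      · have hne : ((n : ℤ)) ≠ 0 := by exact_mod_cast Nat.pos_iff_ne_zero.mp hn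
        have hJn : B (n : ℤ) = J (n : ℤ) := by rw [hBdef]; simp [hne, hn.ne']
        rw [hJn]
        calc ‖J (n : ℤ)‖ ≤ 4 * (mu Set.univ).toReal := hJb _
          _ ≤ Cb := by rw [hCb]; nlinarith [norm_nonneg ζ₀]
    have hCann : 0 ≤ Ca := le_trans (norm_nonneg _) (haB 0)
    have hCbnn : 0 ≤ Cb := le_trans (norm_nonneg _) (hbB 0)
    have haB' : ∀ n : ℕ, ‖A (n : ℤ)‖ ≤ Ca * (n + 1) := fun n => by
      calc ‖A (n : ℤ)‖ ≤ Ca := haB n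
        _ ≤ Ca * (n + 1) := by nlinarith [Nat.cast_nonneg (α := ℝ) n]
    have hbB' : ∀ n : ℕ, ‖B (n : ℤ)‖ ≤ Cb * (n + 1) := fun n => by
      calc ‖B (n : ℤ)‖ ≤ Cb := hbB n
        _ ≤ Cb * (n + 1) := by nlinarith [Nat.cast_nonneg (α := ℝ) n]
    have hK'b' : ∀ n : ℕ, ‖K' (n : ℤ)‖ ≤ (lam Set.univ).toReal * (n + 1) := fun n => by
      calc ‖K' (n : ℤ)‖ ≤ (lam Set.univ).toReal := hK'b _
        _ ≤ (lam Set.univ).toReal * (n + 1) := by nlinarith [Nat.cast_nonneg (α := ℝ) n]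
    have hfb' : ∀ n : ℕ, ‖fourierC mu (n : ℤ)‖ ≤ (mu Set.univ).toReal * (n + 1) := fun n => by
      calc ‖fourierC mu (n : ℤ)‖ ≤ (mu Set.univ).toReal := fourierC_norm_le mu _
        _ ≤ (mu Set.univ).toReal * (n + 1) := by nlinarith [Nat.cast_nonneg (α := ℝ) n]
    -- Fz
    have hFz : ∀ z : ℂ, ‖z‖ < 1 →
        cauchyTσ lam (2 * c₀'.im) z = 2 * ∑' n : ℕ, A (n : ℤ) * z ^ n := by
      intro z hz1
      have hsumK' : Summable fun n : ℕ => K' (n : ℤ) * z ^ n := summ_aux hK'b' hz1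
      have hsumIf : Summable fun n : ℕ => (if n = 0 then (c₀ + K 0 - K' 0) else 0) := by
        apply summable_of_ne_finset_zero (s := {0})
        intro n hn
        rw [if_neg (by simpa using hn)]
      have hTsum : ∑' n : ℕ, A (n : ℤ) * z ^ n
          = (∑' n : ℕ, K' (n : ℤ) * z ^ n) + (c₀ + K 0 - K' 0) := by
        have hterm : ∀ n : ℕ, A (n : ℤ) * z ^ n
            = K' (n : ℤ) * z ^ n + (if n = 0 then (c₀ + K 0 - K' 0) else 0) := by
          intro n
          rcases Nat.eq_zero_or_pos n with rfl | hn
          · norm_num [hA]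
            try ring
          · have hne : ((n : ℤ)) ≠ 0 := by exact_mod_cast Nat.pos_iff_ne_zero.mp hn
            simp only [hA, hK'def (n : ℤ), if_neg hne, if_neg (Nat.pos_iff_ne_zero.mp hn),
              zero_add, add_zero]
        rw [tsum_congr hterm, hsumK'.tsum_add hsumIf, tsum_eq_single 0 (fun n hn => if_neg hn),
          if_pos rfl]
      have hfour' : ∑' n : ℕ, fourierC lam (n : ℤ) * z ^ n = ∑' n : ℕ, K' (n : ℤ) * z ^ n :=
        tsum_congr fun n => by rw [hFour]
      have hc0 : K' 0 + 2 * ((c₀'.im : ℝ) : ℂ) * I = 2 * c₀ + 2 * K 0 := by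
        rw [hK'def 0, if_pos rfl, hc₀']
        apply Complex.ext <;> simp [hK0im] <;> ring
      rw [show cauchyTσ lam (2 * c₀'.im) z = cauchyT lam z + ((2 * c₀'.im : ℝ) : ℂ) * I from rfl, cauchy_series lam hz1, hfour', ← hFour 0, hTsum]
      push_cast
      linear_combination hc0
    -- Gz
    have hGz : ∀ z : ℂ, ‖z‖ < 1 →
        cauchyTσ mu ζ₀' z = (∑' n : ℕ, B (n : ℤ) * z ^ n) / 2 := by
      intro z hz1
      have hsumf : Summable fun n : ℕ => fourierC mu (n : ℤ) * z ^ n := summ_aux hfb' hz1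
      have hsumf4 : Summable fun n : ℕ => 4 * fourierC mu (n : ℤ) * z ^ n := by
        have := hsumf.mul_left 4
        refine this.congr fun n => by ring
      have hsumIf : Summable fun n : ℕ => (if n = 0 then ζ₀ else 0) := by
        apply summable_of_ne_finset_zero (s := {0})
        intro n hn
        rw [if_neg (by simpa using hn)]
      have hTsumB : ∑' n : ℕ, B (n : ℤ) * z ^ n
          = 4 * (∑' n : ℕ, fourierC mu (n : ℤ) * z ^ n) + ζ₀ := by
        have hterm : ∀ n : ℕ, B (n : ℤ) * z ^ n
            = 4 * fourierC mu (n : ℤ) * z ^ n + (if n = 0 then ζ₀ else 0) := by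
          intro n
          rcases Nat.eq_zero_or_pos n with rfl | hn
          · norm_num [hBdef, hJ 0]
            try ring
          · have hne : ((n : ℤ)) ≠ 0 := by exact_mod_cast Nat.pos_iff_ne_zero.mp hn
            simp only [hBdef, if_neg hne, if_neg (Nat.pos_iff_ne_zero.mp hn),
              zero_add, add_zero, hJ (n : ℤ)]
        rw [tsum_congr hterm, hsumf4.tsum_add hsumIf, tsum_eq_single 0 (fun n hn => if_neg hn),
          if_pos rfl, ← tsum_mul_left]
        congr 1
        exact tsum_congr fun n => by ring
      have hz0 : ζ₀ = 2 * I * (ζ₀' : ℂ) - 2 * fourierC mu 0 := by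
        rw [hζ₀, hJ 0]; ring
      rw [show cauchyTσ mu ζ₀' z = cauchyT mu z + ((ζ₀' : ℝ) : ℂ) * I from rfl, cauchy_series mu hz1, hTsumB]
      linear_combination -hz0 / 2
    -- product of the series is 1
    have hProd : ∀ z : ℂ, ‖z‖ < 1 →
        (∑' n : ℕ, A (n : ℤ) * z ^ n) * (∑' n : ℕ, B (n : ℤ) * z ^ n) = 1 := by
      intro z hz1
      have hball : z ∈ Metric.ball (0 : ℂ) 1 := by
        rwa [Metric.mem_ball, dist_zero_right]
      have := hB z hball
      rw [hFz z hz1, hGz z hz1] at this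
      linear_combination this
    -- Cauchy product coefficients
    have hcs : ∀ z : ℂ, ‖z‖ < 1 →
        ∑' n : ℕ, (∑ k ∈ Finset.range (n + 1), A (k : ℤ) * B ((n : ℤ) - (k : ℤ))) * z ^ n
          = 1 := by
      intro z hz1
      have hfn : Summable fun n : ℕ => ‖A (n : ℤ) * z ^ n‖ := summ_norm_aux haB' hz1
      have hgn : Summable fun n : ℕ => ‖B (n : ℤ) * z ^ n‖ := summ_norm_aux hbB' hz1
      have hcp := tsum_mul_tsum_eq_tsum_sum_range_of_summable_norm hfn hgn
      rw [hProd z hz1] at hcp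
      rw [hcp]
      apply tsum_congr
      intro n
      rw [Finset.sum_mul]
      refine Finset.sum_congr rfl fun k hk => ?_
      rw [Finset.mem_range] at hk
      have hk' : k ≤ n := by omega
      have hcast : ((n - k : ℕ) : ℤ) = (n : ℤ) - (k : ℤ) := by
        push_cast [Nat.cast_sub hk']; ring
      rw [hcast]
      have hpow : z ^ k * z ^ (n - k) = z ^ n := by
        rw [← pow_add]; congr 1; omega
      calc A (k : ℤ) * B ((n : ℤ) - (k : ℤ)) * z ^ n
          = A (k : ℤ) * B ((n : ℤ) - (k : ℤ)) * (z ^ k * z ^ (n - k)) := by rw [hpow]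
        _ = A (k : ℤ) * z ^ k * (B ((n : ℤ) - (k : ℤ)) * z ^ (n - k)) := by ring
    have hcb : ∀ n : ℕ,
        ‖∑ k ∈ Finset.range (n + 1), A (k : ℤ) * B ((n : ℤ) - (k : ℤ))‖
          ≤ (Ca * Cb) * (n + 1) := by
      intro n
      calc ‖∑ k ∈ Finset.range (n + 1), A (k : ℤ) * B ((n : ℤ) - (k : ℤ))‖
          ≤ ∑ k ∈ Finset.range (n + 1), ‖A (k : ℤ) * B ((n : ℤ) - (k : ℤ))‖ :=
            norm_sum_le _ _
        _ ≤ ∑ _k ∈ Finset.range (n + 1), Ca * Cb := by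
            refine Finset.sum_le_sum fun k hk => ?_
            rw [Finset.mem_range] at hk
            have hk' : k ≤ n := by omega
            have hcast : (n : ℤ) - (k : ℤ) = ((n - k : ℕ) : ℤ) := by
              push_cast [Nat.cast_sub hk']; ring
            rw [norm_mul, hcast]
            exact mul_le_mul (haB k) (hbB (n - k)) (norm_nonneg _) hCann
        _ = (Ca * Cb) * (n + 1) := by
            rw [Finset.sum_const, Finset.card_range, nsmul_eq_mul]
            push_cast
            ring
    have hconv : ∀ n : ℕ, ∑ k ∈ Finset.range (n + 1), A (k : ℤ) * B ((n : ℤ) - (k : ℤ))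
        = if n = 0 then 1 else 0 := coeff_unique hcb hcs
    have hy' : ∀ n : ℕ, y n = ∑ j ∈ Finset.range (n + 1), A ((n : ℤ) - (j : ℤ)) * x j := by
      intro n
      rw [hxy n]
      simp only [hA]
      exact (split_sum K c₀ x n).symm
    intro n
    have hfin := conv_inv A B x y hconv hy' n
    rw [← hfin]
    simp only [hBdef]
    exact split_sum J ζ₀ y n
end
end

section
/- Let μ_n, μ ∈ 𝓜_c(ℝ). Then μ_n → μ in the W_∞ topology if and only if μ_n ⇀ μ weakly and the supports supp μ_n are uniformly bounded (i.e., contained in a fixed compact interval). -/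
/-!
Statement 14: for `μ_n, μ ∈ 𝓜_c(ℝ)` (nonzero finite compactly supported non-negative measures),
`μ_n → μ` in the `W_∞` topology (integrals of all continuous functions converge) iff `μ_n ⇀ μ`
weakly (integrals of all bounded continuous functions converge) and the supports of the `μ_n`
are uniformly bounded.
-/

open MeasureTheory Filter Set

noncomputable section

/-- `λ ∈ 𝓜_c(ℝ)`: nonzero finite non-negative compactly supported. -/
def Mc (lam : Measure ℝ) : Prop :=
  lam ≠ 0 ∧ IsFiniteMeasure lam ∧ ∃ R : ℝ, lam {s : ℝ | R < |s|} = 0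

/-- Partial sums of a piecewise-linear staircase function. -/
private def Fk (c : ℕ → ℝ) (K : ℕ) (t : ℝ) : ℝ :=
  ∑ k ∈ Finset.range K, c k * min 1 (max 0 (t - k))

private lemma Fk_cont (c : ℕ → ℝ) (K : ℕ) : Continuous (Fk c K) := by
  refine continuous_finset_sum _ fun k _ => Continuous.mul continuous_const ?_
  exact continuous_const.min (continuous_const.max (continuous_id.sub continuous_const))

private lemma Fk_congr (c : ℕ → ℝ) {K K' : ℕ} {t : ℝ} (h : t ≤ K) (h' : K ≤ K') :
    Fk c K t = Fk c K' t := by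
  refine Finset.sum_subset (Finset.range_mono h') fun k hk hk' => ?_
  have hKk : (K : ℝ) ≤ k := by
    exact_mod_cast Nat.not_lt.1 (fun hlt => hk' (Finset.mem_range.2 hlt))
  have h0 : max 0 (t - k) = 0 := max_eq_left (by linarith)
  rw [h0, min_eq_right zero_le_one, mul_zero]

/-- A continuous function dominating all the `c k` staircase values. -/
private def Gf (c : ℕ → ℝ) (t : ℝ) : ℝ := Fk c (⌊t⌋₊ + 1) t

private lemma lt_floor_add_one' (t : ℝ) : t < ((⌊t⌋₊ + 1 : ℕ) : ℝ) := by
  rcases le_or_gt 0 t with h | h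
  · push_cast
    exact Nat.lt_floor_add_one t
  · have : (0 : ℝ) ≤ ((⌊t⌋₊ + 1 : ℕ) : ℝ) := by positivity
    linarith

private lemma Gf_eq (c : ℕ → ℝ) {t : ℝ} {N : ℕ} (h : t < N) : Gf c t = Fk c N t := by
  rcases le_total (⌊t⌋₊ + 1) N with hN | hN
  · exact Fk_congr c (lt_floor_add_one' t).le hN
  · exact (Fk_congr c h.le hN).symm

private lemma Gf_cont (c : ℕ → ℝ) : Continuous (Gf c) := by
  rw [continuous_iff_continuousAt]
  intro t₀
  have hmem : Iio (((⌊t₀⌋₊ + 1 : ℕ) : ℝ)) ∈ nhds t₀ := Iio_mem_nhds (lt_floor_add_one' t₀)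
  have heq : Gf c =ᶠ[nhds t₀] Fk c (⌊t₀⌋₊ + 1) := by
    filter_upwards [hmem] with t ht using Gf_eq c ht
  exact ((Fk_cont c (⌊t₀⌋₊ + 1)).continuousAt).congr heq.symm

private lemma Gf_nonneg {c : ℕ → ℝ} (hc : ∀ k, 0 ≤ c k) (t : ℝ) : 0 ≤ Gf c t := by
  unfold Gf Fk
  exact Finset.sum_nonneg fun k _ =>
    mul_nonneg (hc k) (le_min zero_le_one (le_max_left 0 _))

private lemma Gf_ge {c : ℕ → ℝ} (hc : ∀ k, 0 ≤ c k) {j : ℕ} {t : ℝ} (ht : (j : ℝ) ≤ t) :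
    ∑ k ∈ Finset.range j, c k ≤ Gf c t := by
  have h1 : Fk c j t = ∑ k ∈ Finset.range j, c k := by
    refine Finset.sum_congr rfl fun k hk => ?_
    have hkj : (k : ℝ) + 1 ≤ j := by exact_mod_cast Finset.mem_range.1 hk
    have h1t : (1 : ℝ) ≤ t - k := by linarith
    rw [max_eq_right (by linarith), min_eq_left h1t, mul_one]
  have h2 : j ≤ ⌊t⌋₊ + 1 := (Nat.le_floor ht).trans (Nat.le_succ _)
  rw [← h1]
  unfold Gf Fk
  exact Finset.sum_le_sum_of_subset_of_nonneg (Finset.range_mono h2)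
    fun k _ _ => mul_nonneg (hc k) (le_min zero_le_one (le_max_left 0 _))

/-- A continuous function is integrable against a finite compactly supported measure. -/
private lemma integrable_mc {f : ℝ → ℝ} (hf : Continuous f) (ν : Measure ℝ)
    [IsFiniteMeasure ν] {R : ℝ} (hR : ν {s : ℝ | R < |s|} = 0) : Integrable f ν := by
  set B := max R 0 with hBdef
  have hB0 : (0 : ℝ) ≤ B := le_max_right R 0
  have hB : ν {s : ℝ | B < |s|} = 0 :=
    measure_mono_null (fun x hx => lt_of_le_of_lt (le_max_left R 0) hx) hR
  obtain ⟨z, hz, hzb⟩ := (isCompact_Icc : IsCompact (Icc (-B) B)).exists_isMaxOn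
    ⟨0, neg_nonpos.2 hB0, hB0⟩ ((hf.abs).continuousOn)
  refine Integrable.mono' (integrable_const (|f z|)) hf.aestronglyMeasurable ?_
  rw [ae_iff]
  refine measure_mono_null (fun x hx => ?_) hB
  simp only [Real.norm_eq_abs, mem_setOf_eq, not_le] at hx ⊢
  by_contra h'
  push_neg at h'
  have hxI : x ∈ Icc (-B) B := abs_le.1 h'
  exact absurd (hzb hxI) (not_le.2 hx)

theorem statement14 (μn : ℕ → Measure ℝ) (μ : Measure ℝ)
    (hn : ∀ n, Mc (μn n)) (h : Mc μ) :
    (∀ f : ℝ → ℝ, Continuous f →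
      Filter.Tendsto (fun n => ∫ x : ℝ, f x ∂(μn n)) Filter.atTop
        (nhds (∫ x : ℝ, f x ∂μ))) ↔
    ((∀ f : ℝ → ℝ, Continuous f → (∃ C : ℝ, ∀ x, |f x| ≤ C) →
        Filter.Tendsto (fun n => ∫ x : ℝ, f x ∂(μn n)) Filter.atTop
          (nhds (∫ x : ℝ, f x ∂μ))) ∧
      ∃ R : ℝ, ∀ n, μn n {s : ℝ | R < |s|} = 0) := by
  constructor
  · intro H
    refine ⟨fun f hf _ => H f hf, ?_⟩
    by_contra hcon
    push_neg at hcon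
    -- for each k, pick an index whose measure charges {k < |s|}
    choose ns hns using fun k : ℕ => hcon k
    haveI : ∀ i, IsFiniteMeasure (μn i) := fun i => (hn i).2.1
    set m : ℕ → ℝ := fun k => (μn (ns k) {s : ℝ | (k : ℝ) < |s|}).toReal with hm_def
    have hm : ∀ k, 0 < m k := fun k =>
      ENNReal.toReal_pos (hns k) (measure_ne_top _ _)
    set c : ℕ → ℝ := fun k => ((k : ℝ) + 1) / m k with hc_def
    have hc0 : ∀ k, 0 ≤ c k := fun k => div_nonneg (by positivity) (hm k).le
    set f : ℝ → ℝ := fun x => Gf c (|x| + 1) with hf_def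
    have hfc : Continuous f := (Gf_cont c).comp (continuous_abs.add continuous_const)
    have hf0 : ∀ x, 0 ≤ f x := fun x => Gf_nonneg hc0 _
    -- the integrals along the chosen subsequence are large
    have key : ∀ k : ℕ, (k : ℝ) + 1 ≤ ∫ x, f x ∂(μn (ns k)) := by
      intro k
      obtain ⟨R, hR⟩ := (hn (ns k)).2.2
      have hint : Integrable f (μn (ns k)) := integrable_mc hfc _ hR
      have hset : MeasurableSet {s : ℝ | (k : ℝ) < |s|} :=
        measurableSet_lt measurable_const continuous_abs.measurable
      have hfge : ∀ x ∈ {s : ℝ | (k : ℝ) < |s|}, c k ≤ f x := by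
        intro x hx
        have hx' : ((k + 1 : ℕ) : ℝ) ≤ |x| + 1 := by
          push_cast
          have : (k : ℝ) < |x| := hx
          linarith
        calc c k ≤ ∑ i ∈ Finset.range (k + 1), c i :=
              Finset.single_le_sum (fun i _ => hc0 i) (Finset.self_mem_range_succ k)
          _ ≤ Gf c (|x| + 1) := Gf_ge hc0 hx'
      have h1 : c k * m k ≤ ∫ x in {s : ℝ | (k : ℝ) < |s|}, f x ∂(μn (ns k)) :=
        by
          have := setIntegral_ge_of_const_le hset (measure_ne_top _ _) hfge hint.integrableOn
          rw [smul_eq_mul, mul_comm] at this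
          exact this
      have h2 : ∫ x in {s : ℝ | (k : ℝ) < |s|}, f x ∂(μn (ns k)) ≤ ∫ x, f x ∂(μn (ns k)) :=
        setIntegral_le_integral hint (Eventually.of_forall hf0)
      have h3 : c k * m k = (k : ℝ) + 1 := div_mul_cancel₀ _ (hm k).ne'
      linarith
    -- the chosen indices go to infinity
    choose Rb hRb using fun i => (hn i).2.2
    have hlarge : ∀ N M : ℕ, ∃ k : ℕ, M ≤ k ∧ N ≤ ns k := by
      intro N M
      have hne : (Finset.range (N + 1)).Nonempty := ⟨0, by simp⟩
      set T := (Finset.range (N + 1)).sup' hne Rb with hT_def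
      refine ⟨max M ⌈T⌉₊, le_max_left _ _, ?_⟩
      by_contra hlt
      push_neg at hlt
      have hns_le : ns (max M ⌈T⌉₊) ≤ N := Nat.lt_succ_iff.1 (Nat.lt_succ_of_lt hlt)
      have hTle : Rb (ns (max M ⌈T⌉₊)) ≤ T :=
        Finset.le_sup' Rb (Finset.mem_range.2 (Nat.lt_succ_of_le hns_le))
      have hTk : T ≤ ((max M ⌈T⌉₊ : ℕ) : ℝ) := by
        calc T ≤ (⌈T⌉₊ : ℝ) := Nat.le_ceil T
          _ ≤ ((max M ⌈T⌉₊ : ℕ) : ℝ) := by exact_mod_cast le_max_right M ⌈T⌉₊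
      have hsub : {s : ℝ | ((max M ⌈T⌉₊ : ℕ) : ℝ) < |s|} ⊆
          {s : ℝ | Rb (ns (max M ⌈T⌉₊)) < |s|} := by
        intro x hx
        exact lt_of_le_of_lt (hTle.trans hTk) hx
      exact hns (max M ⌈T⌉₊) (measure_mono_null hsub (hRb _))
    -- contradiction with convergence of ∫ f
    have hT := H f hfc
    set L := ∫ x, f x ∂μ with hL_def
    have hev : ∀ᶠ n in atTop, (∫ x, f x ∂(μn n)) < L + 1 :=
      hT.eventually_lt_const (by linarith)
    obtain ⟨N, hN⟩ := eventually_atTop.1 hev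
    obtain ⟨k, hkM, hkN⟩ := hlarge N ⌈L⌉₊
    have h1 : (∫ x, f x ∂(μn (ns k))) < L + 1 := hN _ hkN
    have h2 : (k : ℝ) + 1 ≤ ∫ x, f x ∂(μn (ns k)) := key k
    have h3 : L ≤ (k : ℝ) := by
      calc L ≤ (⌈L⌉₊ : ℝ) := Nat.le_ceil L
        _ ≤ (k : ℝ) := by exact_mod_cast hkM
    linarith
  · rintro ⟨hw, R, hR⟩ f hf
    obtain ⟨R', hR'⟩ := h.2.2
    set B := max (max R R') 0 with hB_def
    have hB0 : (0 : ℝ) ≤ B := le_max_right _ _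
    set g : ℝ → ℝ := fun x => f (max (-B) (min B x)) with hg_def
    have hgc : Continuous g :=
      hf.comp (continuous_const.max (continuous_const.min continuous_id))
    obtain ⟨z, hz, hzb⟩ := (isCompact_Icc : IsCompact (Icc (-B) B)).exists_isMaxOn
      ⟨0, neg_nonpos.2 hB0, hB0⟩ ((hf.abs).continuousOn)
    have hgb : ∃ C : ℝ, ∀ x, |g x| ≤ C := by
      refine ⟨|f z|, fun x => ?_⟩
      have hmem : max (-B) (min B x) ∈ Icc (-B) B :=
        ⟨le_max_left _ _, max_le (neg_le_self hB0) (min_le_left B x)⟩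
      exact hzb hmem
    have key : ∀ (ν : Measure ℝ) (S : ℝ), S ≤ B → ν {s : ℝ | S < |s|} = 0 →
        ∫ x, f x ∂ν = ∫ x, g x ∂ν := by
      intro ν S hS hnull
      refine integral_congr_ae ?_
      rw [Filter.EventuallyEq, ae_iff]
      refine measure_mono_null (fun x hx => ?_) hnull
      simp only [mem_setOf_eq] at hx ⊢
      by_contra h'
      push_neg at h'
      have hxB : |x| ≤ B := le_trans h' hS
      have hx1 : min B x = x := min_eq_right (abs_le.1 hxB).2
      have hx2 : max (-B) x = x := max_eq_right (abs_le.1 hxB).1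
      exact hx (by rw [hg_def]; simp only [hx1, hx2])
    have hμ : ∫ x, f x ∂μ = ∫ x, g x ∂μ :=
      key μ R' ((le_max_right R R').trans (le_max_left _ _)) hR'
    have hμn : ∀ n, ∫ x, f x ∂(μn n) = ∫ x, g x ∂(μn n) := fun n =>
      key (μn n) R ((le_max_left R R').trans (le_max_left _ _)) (hR n)
    rw [hμ]
    exact (hw g hgc hgb).congr fun n => (hμn n).symm
end
end

section
/- Fix ε > 0, p ≥ 1, and let f^ε(α) = 1/(α+ε). For any probability measures μ, ν on [0,∞), the associated completely monotone kernels K_μ(t) = ∫ e^{−αt} dμ(α) and K_ν(t) = ∫ e^{−αt} dν(α) satisfy ‖K_μ − K_ν‖_{L_ε^p} ≤ c · 𝒲₁(f^ε_*μ, f^ε_*ν)^{1/p}, with c = 2 in general and c = 2(1/(2p))^{1/p} when p is an odd integer (so c = 1 for p = 1). For non-negative measures μ, ν on [0,∞) of equal mass m > 0, the same bounds hold with c replaced by 2m, respectively 2(1/(2p))^{1/p} m. If supp μ and supp ν are both bounded away from zero, the result also holds with ε = 0. -/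
/-!
Statement 16: Wasserstein-1 bound on completely monotone kernels.  For probability measures
`μ, ν` on `[0,∞)` and `f^ε(α) = 1/(α+ε)`,
`‖K_μ − K_ν‖_{L_ε^p} ≤ c · 𝒲₁(f^ε_*μ, f^ε_*ν)^{1/p}` with `c = 2` in general and
`c = 2(1/(2p))^{1/p}` when `p` is an odd integer; for non-negative measures of equal mass `m > 0`
the same holds with `c` replaced by `2m`, resp. `2(1/(2p))^{1/p} m` (with the Wasserstein distance
of the normalized measures); and the case `ε = 0` is allowed when both supports are bounded away
from zero.
-/

open MeasureTheory Filter Set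
open scoped ENNReal

noncomputable section
open scoped Topology

/-- Wasserstein-1 distance (as an extended non-negative real): infimum of `∫ |x−y| dπ` over all
couplings `π` of `ρ` and `τ`. -/
noncomputable def W1 (ρ τ : Measure ℝ) : ℝ≥0∞ :=
  ⨅ (pl : Measure (ℝ × ℝ)) (_ : pl.map Prod.fst = ρ ∧ pl.map Prod.snd = τ),
    ∫⁻ q : ℝ × ℝ, ENNReal.ofReal |q.1 - q.2| ∂pl

/-- Completely monotone kernel associated to a measure: `K_μ(t) = ∫ e^{−αt} dμ(α)`. -/
noncomputable def Kker (μ : Measure ℝ) (t : ℝ) : ℝ := ∫ α : ℝ, Real.exp (-α * t) ∂μ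

/-- The ε-regularized `Lᵖ` norm `(∫₀^∞ e^{−εpt}|g(t)|ᵖ dt)^{1/p}`. -/
noncomputable def LpErr (ε p : ℝ) (g : ℝ → ℝ) : ℝ :=
  (∫ t in Set.Ioi (0 : ℝ), Real.exp (-(ε * p * t)) * |g t| ^ p) ^ (1 / p)


lemma myexp_int (c : ℝ) (hc : 0 < c) : ∫ t in Ioi (0:ℝ), Real.exp (-(c * t)) = c⁻¹ := by
  have hderiv : ∀ x ∈ Ioi (0:ℝ),
      HasDerivAt (fun t => -Real.exp (-(c*t)) / c) (Real.exp (-(c*x))) x := by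
    intro x _
    have h1 : HasDerivAt (fun t : ℝ => -(c*t)) (-c) x := by
      exact (((hasDerivAt_id x).const_mul c).neg).congr_deriv (by ring)
    have := (h1.exp).neg.div_const c
    exact this.congr_deriv (by field_simp)
  have hint : IntegrableOn (fun t => Real.exp (-(c*t))) (Ioi 0) := by
    simpa [neg_mul] using exp_neg_integrableOn_Ioi 0 hc
  have htend : Tendsto (fun t => -Real.exp (-(c*t)) / c) atTop (𝓝 0) := by
    have : Tendsto (fun t : ℝ => -(c*t)) atTop atBot := by
      simpa [neg_mul] using (tendsto_id (α := ℝ)).const_mul_atTop_of_neg (neg_neg_iff_pos.2 hc)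
    have := (Real.tendsto_exp_atBot.comp this).neg.div_const c
    simpa using this
  have hcont : ContinuousWithinAt (fun t => -Real.exp (-(c*t)) / c) (Ici 0) 0 :=
    (Continuous.continuousWithinAt (by continuity))
  have := integral_Ioi_of_hasDerivAt_of_tendsto hcont hderiv hint htend
  rw [this, mul_zero, neg_zero, Real.exp_zero]
  ring

lemma pair_ord {x y : ℝ} (hx : 0 < x) (hxy : x ≤ y) :
    ∫⁻ t in Ioi (0:ℝ), ENNReal.ofReal |Real.exp (-(t * x⁻¹)) - Real.exp (-(t * y⁻¹))|
      = ENNReal.ofReal (y - x) := by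
  have hy : 0 < y := lt_of_lt_of_le hx hxy
  have hintx : IntegrableOn (fun t => Real.exp (-(t * x⁻¹))) (Ioi 0) := by
    have := exp_neg_integrableOn_Ioi 0 (inv_pos.2 hx)
    simpa [neg_mul, mul_comm] using this
  have hinty : IntegrableOn (fun t => Real.exp (-(t * y⁻¹))) (Ioi 0) := by
    have := exp_neg_integrableOn_Ioi 0 (inv_pos.2 hy)
    simpa [neg_mul, mul_comm] using this
  have hmono : ∀ t ∈ Ioi (0:ℝ), Real.exp (-(t * x⁻¹)) ≤ Real.exp (-(t * y⁻¹)) := by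
    intro t ht
    have ht0 : (0:ℝ) ≤ t := le_of_lt ht
    have hinv : y⁻¹ ≤ x⁻¹ := by
      exact inv_anti₀ hx hxy
    have := mul_le_mul_of_nonneg_left hinv ht0
    exact Real.exp_le_exp.2 (by linarith)
  have habs : ∀ t ∈ Ioi (0:ℝ),
      ENNReal.ofReal |Real.exp (-(t * x⁻¹)) - Real.exp (-(t * y⁻¹))|
        = ENNReal.ofReal (Real.exp (-(t * y⁻¹)) - Real.exp (-(t * x⁻¹))) := by
    intro t ht
    rw [abs_sub_comm, abs_of_nonneg (sub_nonneg.2 (hmono t ht))]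
  rw [setLIntegral_congr_fun measurableSet_Ioi habs]
  have hsub : IntegrableOn (fun t => Real.exp (-(t * y⁻¹)) - Real.exp (-(t * x⁻¹))) (Ioi 0) :=
    hinty.sub hintx
  rw [← ofReal_integral_eq_lintegral_ofReal hsub
    ((ae_restrict_iff' measurableSet_Ioi).2 (ae_of_all _ fun t ht => sub_nonneg.2 (hmono t ht)))]
  congr 1
  rw [integral_sub hinty hintx]
  have h1 : ∫ t in Ioi (0:ℝ), Real.exp (-(t * y⁻¹)) = y := by
    have h := myexp_int y⁻¹ (inv_pos.2 hy)
    rw [inv_inv] at h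
    have heq : ∫ t in Ioi (0:ℝ), Real.exp (-(t * y⁻¹)) = ∫ t in Ioi (0:ℝ), Real.exp (-(y⁻¹ * t)) := by
      apply setIntegral_congr_fun measurableSet_Ioi
      intro t _; dsimp only; rw [mul_comm]
    rw [heq, h]
  have h2 : ∫ t in Ioi (0:ℝ), Real.exp (-(t * x⁻¹)) = x := by
    have h := myexp_int x⁻¹ (inv_pos.2 hx)
    rw [inv_inv] at h
    have heq : ∫ t in Ioi (0:ℝ), Real.exp (-(t * x⁻¹)) = ∫ t in Ioi (0:ℝ), Real.exp (-(x⁻¹ * t)) := by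
      apply setIntegral_congr_fun measurableSet_Ioi
      intro t _; dsimp only; rw [mul_comm]
    rw [heq, h]
  rw [h1, h2]

lemma pair_lem {x y : ℝ} (hx : 0 < x) (hy : 0 < y) :
    ∫⁻ t in Ioi (0:ℝ), ENNReal.ofReal |Real.exp (-(t * x⁻¹)) - Real.exp (-(t * y⁻¹))|
      ≤ ENNReal.ofReal |x - y| := by
  rcases le_total x y with h | h
  · rw [pair_ord hx h, abs_sub_comm, abs_of_nonneg (sub_nonneg.2 h)]
  · have := pair_ord hy h
    simp only [abs_sub_comm (Real.exp (-(_ * y⁻¹)))] at this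
    rw [this, abs_of_nonneg (sub_nonneg.2 h)]

lemma one_le_const (p : ℝ) (hp : 1 ≤ p) (hodd : ∃ k : ℕ, p = 2*(k:ℝ)+1) :
    1 ≤ 2 * (1/(2*p)) ^ (1/p) := by
  have hp0 : (0:ℝ) < p := lt_of_lt_of_le one_pos hp
  have h2p : 2*p ≤ (2:ℝ)^p := by
    obtain ⟨k, hk⟩ := hodd
    have hb : (1:ℝ) + (k:ℝ)*3 ≤ 4^k := by
      have := one_add_mul_le_pow (a := (3:ℝ)) (by norm_num) k
      norm_num [mul_comm] at this
      convert this using 2 <;> norm_num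
    have h4 : (2*(k:ℝ)+1) ≤ 4^k := by
      have : (0:ℝ) ≤ (k:ℝ) := Nat.cast_nonneg k
      nlinarith
    have h2 : (2:ℝ)^p = 2 * 4^k := by
      rw [hk, show (2*(k:ℝ)+1) = ((2*k+1 : ℕ):ℝ) by push_cast; ring, Real.rpow_natCast,
        pow_add, pow_mul]
      norm_num [mul_comm]
    rw [h2, hk]; nlinarith
  have hbase : ((1:ℝ)/2)^p ≤ 1/(2*p) := by
    rw [one_div, one_div, Real.inv_rpow (by norm_num : (0:ℝ) ≤ 2)]
    exact inv_anti₀ (by positivity) h2p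
  have hmono := Real.rpow_le_rpow (by positivity) hbase (by positivity : (0:ℝ) ≤ 1/p)
  have hid : (((1:ℝ)/2)^p)^(1/p) = 1/2 := by
    rw [← Real.rpow_mul (by norm_num : (0:ℝ) ≤ 1/2), mul_one_div, div_self (ne_of_gt hp0),
      Real.rpow_one]
  rw [hid] at hmono
  linarith

lemma master (p : ℝ) (hp : 1 ≤ p) (ε δ : ℝ) (hδ : 0 < δ)
    (μ ν : Measure ℝ) [IsProbabilityMeasure μ] [IsProbabilityMeasure ν]
    (hμδ : μ {α | α + ε < δ} = 0) (hνδ : ν {α | α + ε < δ} = 0) :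
    LpErr ε p (fun t => Kker μ t - Kker ν t) ≤
      ((W1 (μ.map (fun α => 1 / (α + ε))) (ν.map (fun α => 1 / (α + ε)))).toReal) ^ (1 / p) := by
  have hp0 : (0:ℝ) < p := lt_of_lt_of_le one_pos hp
  set f : ℝ → ℝ := fun α => 1 / (α + ε) with hfdef
  have hfm : Measurable f := by
    simp only [hfdef, one_div]
    exact (measurable_id.add_const ε).inv
  set ρ : Measure ℝ := μ.map f with hρdef
  set τ : Measure ℝ := ν.map f with hτdef
  haveI hρP : IsProbabilityMeasure ρ := Measure.isProbabilityMeasure_map hfm.aemeasurable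
  haveI hτP : IsProbabilityMeasure τ := Measure.isProbabilityMeasure_map hfm.aemeasurable
  set b : ℝ := δ⁻¹ with hbdef
  set S : Set ℝ := Ioc 0 b with hSdef
  have hSm : MeasurableSet S := measurableSet_Ioc
  have hfS : ∀ α : ℝ, ¬(α + ε < δ) → f α ∈ S := by
    intro α hα
    push_neg at hα
    have h1 : 0 < α + ε := lt_of_lt_of_le hδ hα
    constructor
    · simp only [hfdef, one_div]
      exact inv_pos.2 h1
    · simp only [hfdef, one_div, hbdef]
      exact inv_anti₀ hδ hα
  have hρS : ρ Sᶜ = 0 := by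
    rw [hρdef, Measure.map_apply hfm hSm.compl]
    refine measure_mono_null ?_ hμδ
    intro α hα
    by_contra hcon
    exact hα (hfS α hcon)
  have hτS : τ Sᶜ = 0 := by
    rw [hτdef, Measure.map_apply hfm hSm.compl]
    refine measure_mono_null ?_ hνδ
    intro α hα
    by_contra hcon
    exact hα (hfS α hcon)
  -- abbreviations
  set G : ℝ → ℝ → ℝ := fun t x => Real.exp (-(t * x⁻¹)) with hGdef
  have hGmeas : ∀ t : ℝ, Measurable fun x => G t x := by
    intro t
    exact Real.measurable_exp.comp ((measurable_inv.const_mul t).neg)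
  have hGboundS : ∀ t ∈ Ioi (0:ℝ), ∀ x ∈ S, 0 < G t x ∧ G t x ≤ 1 := by
    intro t ht x hx
    refine ⟨Real.exp_pos _, Real.exp_le_one_iff.2 ?_⟩
    have : 0 ≤ t * x⁻¹ := mul_nonneg (le_of_lt ht) (le_of_lt (inv_pos.2 hx.1))
    linarith
  -- the main estimate against an arbitrary coupling
  have key : ∀ pl : Measure (ℝ × ℝ), pl.map Prod.fst = ρ → pl.map Prod.snd = τ →
      ENNReal.ofReal (∫ t in Ioi (0:ℝ),
          Real.exp (-(ε*p*t)) * |Kker μ t - Kker ν t| ^ p)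
        ≤ ∫⁻ q : ℝ × ℝ, ENNReal.ofReal |q.1 - q.2| ∂pl := by
    intro pl h1 h2
    haveI hplP : IsProbabilityMeasure pl := by
      constructor
      have : pl.map Prod.fst Set.univ = pl Set.univ := by
        rw [Measure.map_apply measurable_fst MeasurableSet.univ, preimage_univ]
      rw [← this, h1]
      exact measure_univ
    have ha1 : ∀ᵐ q ∂pl, q.1 ∈ S := by
      apply ae_iff.2
      have : pl (Prod.fst ⁻¹' Sᶜ) = 0 := by
        rw [← Measure.map_apply measurable_fst hSm.compl, h1]
        exact hρS
      exact this
    have ha2 : ∀ᵐ q ∂pl, q.2 ∈ S := by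
      apply ae_iff.2
      have : pl (Prod.snd ⁻¹' Sᶜ) = 0 := by
        rw [← Measure.map_apply measurable_snd hSm.compl, h2]
        exact hτS
      exact this
    -- integrability of the coordinates
    have hInt1 : ∀ t ∈ Ioi (0:ℝ), Integrable (fun q : ℝ × ℝ => G t q.1) pl := by
      intro t ht
      refine Integrable.mono' (integrable_const 1)
        ((hGmeas t).comp measurable_fst).aestronglyMeasurable ?_
      filter_upwards [ha1] with q hq
      rw [Real.norm_eq_abs, abs_of_pos (hGboundS t ht q.1 hq).1]
      exact (hGboundS t ht q.1 hq).2
    have hInt2 : ∀ t ∈ Ioi (0:ℝ), Integrable (fun q : ℝ × ℝ => G t q.2) pl := by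
      intro t ht
      refine Integrable.mono' (integrable_const 1)
        ((hGmeas t).comp measurable_snd).aestronglyMeasurable ?_
      filter_upwards [ha2] with q hq
      rw [Real.norm_eq_abs, abs_of_pos (hGboundS t ht q.2 hq).1]
      exact (hGboundS t ht q.2 hq).2
    -- a.e. lower bound facts on μ, ν
    have hμae : ∀ᵐ α ∂μ, δ ≤ α + ε := by
      apply ae_iff.2
      simpa [not_le] using hμδ
    have hνae : ∀ᵐ α ∂ν, δ ≤ α + ε := by
      apply ae_iff.2
      simpa [not_le] using hνδ
    -- representation
    have hKrep : ∀ (σ : Measure ℝ), IsProbabilityMeasure σ → (∀ᵐ α ∂σ, δ ≤ α + ε) →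
        ∀ t ∈ Ioi (0:ℝ),
        Real.exp (-(ε*t)) * Kker σ t = ∫ x, G t x ∂(σ.map f) := by
      intro σ hσP hσae t ht
      rw [integral_map hfm.aemeasurable (hGmeas t).aestronglyMeasurable]
      rw [Kker, ← integral_const_mul]
      apply integral_congr_ae
      filter_upwards [hσae] with α hα
      have hpos : 0 < α + ε := lt_of_lt_of_le hδ hα
      simp only [hGdef, hfdef, one_div, inv_inv]
      rw [← Real.exp_add]
      ring_nf
    have hrep : ∀ t ∈ Ioi (0:ℝ),
        Real.exp (-(ε*t)) * (Kker μ t - Kker ν t)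
          = ∫ q : ℝ × ℝ, (G t q.1 - G t q.2) ∂pl := by
      intro t ht
      have e1 : ∫ x, G t x ∂ρ = ∫ q : ℝ × ℝ, G t q.1 ∂pl := by
        rw [← h1, integral_map measurable_fst.aemeasurable (hGmeas t).aestronglyMeasurable]
      have e2 : ∫ x, G t x ∂τ = ∫ q : ℝ × ℝ, G t q.2 ∂pl := by
        rw [← h2, integral_map measurable_snd.aemeasurable (hGmeas t).aestronglyMeasurable]
      rw [mul_sub, hKrep μ inferInstance hμae t ht, hKrep ν inferInstance hνae t ht, e1, e2,
        ← integral_sub (hInt1 t ht) (hInt2 t ht)]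
    -- pointwise bound
    have hpt : ∀ t ∈ Ioi (0:ℝ),
        ENNReal.ofReal (Real.exp (-(ε*p*t)) * |Kker μ t - Kker ν t| ^ p)
          ≤ ∫⁻ q : ℝ × ℝ, ENNReal.ofReal |G t q.1 - G t q.2| ∂pl := by
      intro t ht
      set a : ℝ := Real.exp (-(ε*t)) * |Kker μ t - Kker ν t| with hadef
      have ha0 : 0 ≤ a := mul_nonneg (Real.exp_pos _).le (abs_nonneg _)
      have hEq : Real.exp (-(ε*p*t)) * |Kker μ t - Kker ν t| ^ p = a ^ p := by
        rw [hadef, Real.mul_rpow (Real.exp_pos _).le (abs_nonneg _), ← Real.exp_mul]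
        ring_nf
      have hInt12 : Integrable (fun q : ℝ × ℝ => G t q.1 - G t q.2) pl :=
        (hInt1 t ht).sub (hInt2 t ht)
      have hIabs : Integrable (fun q : ℝ × ℝ => |G t q.1 - G t q.2|) pl := hInt12.abs
      have hB : a ≤ ∫ q : ℝ × ℝ, |G t q.1 - G t q.2| ∂pl := by
        have : a = |∫ q : ℝ × ℝ, (G t q.1 - G t q.2) ∂pl| := by
          rw [hadef, ← abs_of_pos (Real.exp_pos (-(ε*t))), ← abs_mul, hrep t ht]
        rw [this]
        simpa [Real.norm_eq_abs] using
          norm_integral_le_integral_norm (μ := pl) (fun q : ℝ × ℝ => G t q.1 - G t q.2)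
      have hR1 : (∫ q : ℝ × ℝ, |G t q.1 - G t q.2| ∂pl) ≤ 1 := by
        have : (∫ q : ℝ × ℝ, |G t q.1 - G t q.2| ∂pl) ≤ ∫ _ : ℝ × ℝ, (1:ℝ) ∂pl := by
          apply integral_mono_ae hIabs (integrable_const 1)
          filter_upwards [ha1, ha2] with q hq1 hq2
          have b1 := hGboundS t ht q.1 hq1
          have b2 := hGboundS t ht q.2 hq2
          rw [abs_le]
          constructor <;> [linarith [b1.1, b2.2]; linarith [b1.2, b2.1]]
        simpa using this
      have hap : a ^ p ≤ a := by
        rcases eq_or_lt_of_le ha0 with h0 | hpos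
        · rw [← h0, Real.zero_rpow (ne_of_gt hp0)]
        · have ha1' : a ≤ 1 := le_trans hB hR1
          calc a ^ p ≤ a ^ (1:ℝ) := Real.rpow_le_rpow_of_exponent_ge hpos ha1' hp
            _ = a := Real.rpow_one a
      calc ENNReal.ofReal (Real.exp (-(ε*p*t)) * |Kker μ t - Kker ν t| ^ p)
          = ENNReal.ofReal (a ^ p) := by rw [hEq]
        _ ≤ ENNReal.ofReal a := ENNReal.ofReal_le_ofReal hap
        _ ≤ ENNReal.ofReal (∫ q : ℝ × ℝ, |G t q.1 - G t q.2| ∂pl) :=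
            ENNReal.ofReal_le_ofReal hB
        _ = ∫⁻ q : ℝ × ℝ, ENNReal.ofReal |G t q.1 - G t q.2| ∂pl :=
            ofReal_integral_eq_lintegral_ofReal hIabs (ae_of_all _ fun q => abs_nonneg _)
    -- integrate over t
    have hA : ENNReal.ofReal (∫ t in Ioi (0:ℝ),
          Real.exp (-(ε*p*t)) * |Kker μ t - Kker ν t| ^ p)
        ≤ ∫⁻ t in Ioi (0:ℝ), ∫⁻ q : ℝ × ℝ, ENNReal.ofReal |G t q.1 - G t q.2| ∂pl := by
      by_cases hi : IntegrableOn
          (fun t => Real.exp (-(ε*p*t)) * |Kker μ t - Kker ν t| ^ p) (Ioi 0)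
      · rw [ofReal_integral_eq_lintegral_ofReal hi (ae_of_all _ fun t =>
          mul_nonneg (Real.exp_pos _).le (Real.rpow_nonneg (abs_nonneg _) p))]
        apply lintegral_mono_ae
        exact (ae_restrict_iff' measurableSet_Ioi).2 (ae_of_all _ hpt)
      · rw [integral_undef hi]
        simp
    have hmeas2 : Measurable fun z : ℝ × (ℝ × ℝ) =>
        ENNReal.ofReal |G z.1 z.2.1 - G z.1 z.2.2| := by
      apply ENNReal.measurable_ofReal.comp
      apply Measurable.abs
      apply Measurable.sub
      · exact Real.measurable_exp.comp ((measurable_fst.mul (measurable_snd.fst.inv)).neg)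
      · exact Real.measurable_exp.comp ((measurable_fst.mul (measurable_snd.snd.inv)).neg)
    have hswap : (∫⁻ t in Ioi (0:ℝ), ∫⁻ q : ℝ × ℝ,
          ENNReal.ofReal |G t q.1 - G t q.2| ∂pl)
        = ∫⁻ q : ℝ × ℝ, (∫⁻ t in Ioi (0:ℝ), ENNReal.ofReal |G t q.1 - G t q.2|) ∂pl := by
      exact lintegral_lintegral_swap hmeas2.aemeasurable
    have hinner : ∀ᵐ q ∂pl,
        (∫⁻ t in Ioi (0:ℝ), ENNReal.ofReal |G t q.1 - G t q.2|)
          ≤ ENNReal.ofReal |q.1 - q.2| := by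
      filter_upwards [ha1, ha2] with q hq1 hq2
      exact pair_lem hq1.1 hq2.1
    calc ENNReal.ofReal (∫ t in Ioi (0:ℝ),
          Real.exp (-(ε*p*t)) * |Kker μ t - Kker ν t| ^ p)
        ≤ ∫⁻ t in Ioi (0:ℝ), ∫⁻ q : ℝ × ℝ, ENNReal.ofReal |G t q.1 - G t q.2| ∂pl := hA
      _ = ∫⁻ q : ℝ × ℝ, (∫⁻ t in Ioi (0:ℝ), ENNReal.ofReal |G t q.1 - G t q.2|) ∂pl := hswap
      _ ≤ ∫⁻ q : ℝ × ℝ, ENNReal.ofReal |q.1 - q.2| ∂pl := lintegral_mono_ae hinner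
  -- conclude
  set A : ℝ := ∫ t in Ioi (0:ℝ), Real.exp (-(ε*p*t)) * |Kker μ t - Kker ν t| ^ p with hAdef
  have hA0 : 0 ≤ A := integral_nonneg fun t =>
    mul_nonneg (Real.exp_pos _).le (Real.rpow_nonneg (abs_nonneg _) p)
  have hW1le : ENNReal.ofReal A ≤ W1 ρ τ := by
    apply le_iInf
    intro pl
    apply le_iInf
    intro hpl
    exact key pl hpl.1 hpl.2
  have hW1ne : W1 ρ τ ≠ ⊤ := by
    have hcoup : (ρ.prod τ).map Prod.fst = ρ ∧ (ρ.prod τ).map Prod.snd = τ := by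
      constructor
      · rw [Measure.map_fst_prod]; simp
      · rw [Measure.map_snd_prod]; simp
    have hb : (∫⁻ q : ℝ × ℝ, ENNReal.ofReal |q.1 - q.2| ∂(ρ.prod τ)) ≤ ENNReal.ofReal b := by
      have haeπ : ∀ᵐ q : ℝ × ℝ ∂(ρ.prod τ), ENNReal.ofReal |q.1 - q.2| ≤ ENNReal.ofReal b := by
        have hc1 : ∀ᵐ q : ℝ × ℝ ∂(ρ.prod τ), q.1 ∈ S := by
          apply ae_iff.2
          have : {q : ℝ × ℝ | ¬ q.1 ∈ S} = Sᶜ ×ˢ (univ : Set ℝ) := by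
            ext q; simp [Set.mem_prod]
          rw [this, Measure.prod_prod, hρS, zero_mul]
        have hc2 : ∀ᵐ q : ℝ × ℝ ∂(ρ.prod τ), q.2 ∈ S := by
          apply ae_iff.2
          have : {q : ℝ × ℝ | ¬ q.2 ∈ S} = (univ : Set ℝ) ×ˢ Sᶜ := by
            ext q; simp [Set.mem_prod]
          rw [this, Measure.prod_prod, hτS, mul_zero]
        filter_upwards [hc1, hc2] with q hq1 hq2
        apply ENNReal.ofReal_le_ofReal
        rw [abs_le]
        constructor
        · linarith [hq1.1, hq1.2, hq2.1, hq2.2]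
        · linarith [hq1.1, hq1.2, hq2.1, hq2.2]
      calc (∫⁻ q : ℝ × ℝ, ENNReal.ofReal |q.1 - q.2| ∂(ρ.prod τ))
          ≤ ∫⁻ _ : ℝ × ℝ, ENNReal.ofReal b ∂(ρ.prod τ) := lintegral_mono_ae haeπ
        _ = ENNReal.ofReal b := by simp
    have hle : W1 ρ τ ≤ ENNReal.ofReal b := by
      refine le_trans (iInf_le_of_le (ρ.prod τ) (iInf_le_of_le hcoup le_rfl)) hb
    exact ne_top_of_le_ne_top ENNReal.ofReal_ne_top hle
  have hA_le : A ≤ (W1 ρ τ).toReal := by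
    have := ENNReal.toReal_mono hW1ne hW1le
    rwa [ENNReal.toReal_ofReal hA0] at this
  have : LpErr ε p (fun t => Kker μ t - Kker ν t) = A ^ (1/p) := rfl
  rw [this]
  exact Real.rpow_le_rpow hA0 hA_le (by positivity)


theorem statement16 (p : ℝ) (hp : 1 ≤ p) (ε : ℝ) (hε : 0 ≤ ε)
    (μ ν : Measure ℝ) (hμ0 : μ (Set.Iio 0) = 0) (hν0 : ν (Set.Iio 0) = 0)
    (hok : 0 < ε ∨ ∃ a > (0 : ℝ), μ (Set.Iio a) = 0 ∧ ν (Set.Iio a) = 0) :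
    (IsProbabilityMeasure μ → IsProbabilityMeasure ν →
      LpErr ε p (fun t => Kker μ t - Kker ν t) ≤
        2 * ((W1 (μ.map (fun α => 1 / (α + ε))) (ν.map (fun α => 1 / (α + ε)))).toReal)
          ^ (1 / p) ∧
      ((∃ k : ℕ, p = 2 * (k : ℝ) + 1) →
        LpErr ε p (fun t => Kker μ t - Kker ν t) ≤
          2 * (1 / (2 * p)) ^ (1 / p) *
            ((W1 (μ.map (fun α => 1 / (α + ε))) (ν.map (fun α => 1 / (α + ε)))).toReal)
              ^ (1 / p))) ∧
    (∀ m : ℝ, 0 < m → μ Set.univ = ENNReal.ofReal m → ν Set.univ = ENNReal.ofReal m →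
      LpErr ε p (fun t => Kker μ t - Kker ν t) ≤
        2 * m * ((W1 (((ENNReal.ofReal m)⁻¹ • μ).map (fun α => 1 / (α + ε)))
            (((ENNReal.ofReal m)⁻¹ • ν).map (fun α => 1 / (α + ε)))).toReal) ^ (1 / p) ∧
      ((∃ k : ℕ, p = 2 * (k : ℝ) + 1) →
        LpErr ε p (fun t => Kker μ t - Kker ν t) ≤
          2 * (1 / (2 * p)) ^ (1 / p) * m *
            ((W1 (((ENNReal.ofReal m)⁻¹ • μ).map (fun α => 1 / (α + ε)))
              (((ENNReal.ofReal m)⁻¹ • ν).map (fun α => 1 / (α + ε)))).toReal) ^ (1 / p))) := by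
  have hp0 : (0:ℝ) < p := lt_of_lt_of_le one_pos hp
  obtain ⟨δ, hδ, hμδ, hνδ⟩ : ∃ δ > (0:ℝ), μ {α | α + ε < δ} = 0 ∧ ν {α | α + ε < δ} = 0 := by
    rcases hok with hε' | ⟨a, ha, hμa, hνa⟩
    · refine ⟨ε, hε', ?_, ?_⟩
      · refine measure_mono_null ?_ hμ0
        intro x hx; simp only [mem_setOf_eq] at hx; simp only [mem_Iio]; linarith
      · refine measure_mono_null ?_ hν0
        intro x hx; simp only [mem_setOf_eq] at hx; simp only [mem_Iio]; linarith
    · refine ⟨a, ha, ?_, ?_⟩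
      · refine measure_mono_null ?_ hμa
        intro x hx; simp only [mem_setOf_eq] at hx; simp only [mem_Iio]; linarith
      · refine measure_mono_null ?_ hνa
        intro x hx; simp only [mem_setOf_eq] at hx; simp only [mem_Iio]; linarith
  constructor
  · intro hμP hνP
    haveI := hμP; haveI := hνP
    have h := master p hp ε δ hδ μ ν hμδ hνδ
    have hWnn : 0 ≤ ((W1 (μ.map (fun α => 1 / (α + ε)))
        (ν.map (fun α => 1 / (α + ε)))).toReal) ^ (1/p) :=
      Real.rpow_nonneg ENNReal.toReal_nonneg _
    constructor
    · exact le_trans h (le_mul_of_one_le_left hWnn one_le_two)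
    · intro hodd
      exact le_trans h (le_mul_of_one_le_left hWnn (one_le_const p hp hodd))
  · intro m hm hμm hνm
    set c : ℝ≥0∞ := (ENNReal.ofReal m)⁻¹ with hcdef
    have hm0 : ENNReal.ofReal m ≠ 0 := (ENNReal.ofReal_pos.2 hm).ne'
    haveI hμ'P : IsProbabilityMeasure (c • μ) := by
      constructor
      rw [Measure.smul_apply, hμm, smul_eq_mul, hcdef,
        ENNReal.inv_mul_cancel hm0 ENNReal.ofReal_ne_top]
    haveI hν'P : IsProbabilityMeasure (c • ν) := by
      constructor
      rw [Measure.smul_apply, hνm, smul_eq_mul, hcdef,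
        ENNReal.inv_mul_cancel hm0 ENNReal.ofReal_ne_top]
    have hμ'δ : (c • μ) {α | α + ε < δ} = 0 := by
      rw [Measure.smul_apply, hμδ]; simp
    have hν'δ : (c • ν) {α | α + ε < δ} = 0 := by
      rw [Measure.smul_apply, hνδ]; simp
    have h := master p hp ε δ hδ (c • μ) (c • ν) hμ'δ hν'δ
    have hctr : c.toReal = m⁻¹ := by
      rw [hcdef, ENNReal.toReal_inv, ENNReal.toReal_ofReal hm.le]
    have hK : ∀ t, Kker μ t - Kker ν t = m * (Kker (c • μ) t - Kker (c • ν) t) := by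
      intro t
      have h1 : Kker (c • μ) t = m⁻¹ * Kker μ t := by
        rw [Kker, Kker, integral_smul_measure, hctr, smul_eq_mul]
      have h2 : Kker (c • ν) t = m⁻¹ * Kker ν t := by
        rw [Kker, Kker, integral_smul_measure, hctr, smul_eq_mul]
      rw [h1, h2]
      field_simp
    have hscale : LpErr ε p (fun t => Kker μ t - Kker ν t)
        = m * LpErr ε p (fun t => Kker (c • μ) t - Kker (c • ν) t) := by
      rw [LpErr, LpErr]
      have hptw : ∀ t : ℝ, Real.exp (-(ε*p*t)) * |Kker μ t - Kker ν t| ^ p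
          = m^p * (Real.exp (-(ε*p*t)) * |Kker (c • μ) t - Kker (c • ν) t| ^ p) := by
        intro t
        rw [hK t, abs_mul, abs_of_pos hm, Real.mul_rpow hm.le (abs_nonneg _)]
        ring
      rw [show (∫ t in Set.Ioi (0:ℝ), Real.exp (-(ε*p*t)) * |Kker μ t - Kker ν t| ^ p)
          = ∫ t in Set.Ioi (0:ℝ),
              m^p * (Real.exp (-(ε*p*t)) * |Kker (c • μ) t - Kker (c • ν) t| ^ p) from
        integral_congr_ae (ae_of_all _ fun t => hptw t)]
      rw [integral_const_mul]
      rw [Real.mul_rpow (Real.rpow_nonneg hm.le p)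
        (integral_nonneg fun t => by positivity)]
      congr 1
      rw [← Real.rpow_mul hm.le, mul_one_div, div_self hp0.ne', Real.rpow_one]
    rw [hscale]
    have hWnn : 0 ≤ ((W1 ((c • μ).map (fun α => 1 / (α + ε)))
        ((c • ν).map (fun α => 1 / (α + ε)))).toReal) ^ (1/p) :=
      Real.rpow_nonneg ENNReal.toReal_nonneg _
    have hL := mul_le_mul_of_nonneg_left h hm.le
    constructor
    · refine le_trans hL ?_
      rw [show 2 * m * ((W1 ((c • μ).map (fun α => 1 / (α + ε)))
          ((c • ν).map (fun α => 1 / (α + ε)))).toReal) ^ (1/p)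
        = 2 * (m * ((W1 ((c • μ).map (fun α => 1 / (α + ε)))
          ((c • ν).map (fun α => 1 / (α + ε)))).toReal) ^ (1/p)) by ring]
      exact le_mul_of_one_le_left (mul_nonneg hm.le hWnn) one_le_two
    · intro hodd
      refine le_trans hL ?_
      rw [show 2 * (1 / (2 * p)) ^ (1/p) * m * ((W1 ((c • μ).map (fun α => 1 / (α + ε)))
          ((c • ν).map (fun α => 1 / (α + ε)))).toReal) ^ (1/p)
        = (2 * (1 / (2 * p)) ^ (1/p)) * (m * ((W1 ((c • μ).map (fun α => 1 / (α + ε)))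
          ((c • ν).map (fun α => 1 / (α + ε)))).toReal) ^ (1/p)) by ring]
      exact le_mul_of_one_le_left (mul_nonneg hm.le hWnn) (one_le_const p hp hodd)
end
end

section
/- Let 𝒟_n denote the set of discrete non-negative measures on ℝ₊ = [0,∞) with n atoms. For any finite non-negative Borel measure μ on ℝ₊ with associated completely monotone kernel K_μ = 𝓛[μ], and any ε > 0, one has inf_{μ_n ∈ 𝒟_n} ‖K_μ − K_{μ_n}‖_{L_ε^1} ≤ ‖μ‖ / (2(inf supp μ + ε) · n). If supp μ is bounded away from zero, the bound also holds with ε = 0. -/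
open MeasureTheory Filter Set
open scoped ENNReal

noncomputable section

/-- The ε-regularized `L¹` norm `∫₀^∞ e^{−εt}|g(t)| dt`. -/
noncomputable def L1Err (ε : ℝ) (g : ℝ → ℝ) : ℝ :=
  ∫ t in Set.Ioi (0 : ℝ), Real.exp (-(ε * t)) * |g t|

/-- `𝓓_n`: discrete non-negative measures on `ℝ₊` with `n` atoms. -/
def Dn (n : ℕ) (ρ : Measure ℝ) : Prop :=
  ∃ (β : Fin n → ℝ) (α : Fin n → ℝ), (∀ i, 0 ≤ β i) ∧ (∀ i, 0 ≤ α i) ∧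
    ρ = ∑ i : Fin n, ENNReal.ofReal (β i) • Measure.dirac (α i)

/-- Closed support of a measure on `ℝ`. -/
def msuppR (μ : Measure ℝ) : Set ℝ := {s | ∀ U ∈ nhds s, μ U ≠ 0}

lemma exp_int {b : ℝ} (hb : 0 < b) : ∫ t in Ioi (0:ℝ), Real.exp (-(b*t)) = 1/b := by
  have := integral_comp_mul_left_Ioi (fun x => Real.exp (-x)) 0 hb
  simp only [mul_zero, integral_exp_neg_Ioi, Real.exp_zero, smul_eq_mul, mul_one] at this
  simpa [one_div] using this

lemma exp_intOn {b : ℝ} (hb : 0 < b) :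
    IntegrableOn (fun t => Real.exp (-(b*t))) (Ioi (0:ℝ)) := by
  simpa [neg_mul] using exp_neg_integrableOn_Ioi 0 hb

lemma inner_int {x y : ℝ} (hx : 0 < x) (hxy : x ≤ y) :
    ∫⁻ t in Ioi (0:ℝ), ENNReal.ofReal |Real.exp (-(x*t)) - Real.exp (-(y*t))|
      = ENNReal.ofReal (1/x - 1/y) := by
  have hy : 0 < y := lt_of_lt_of_le hx hxy
  have key : ∀ t ∈ Ioi (0:ℝ),
      ENNReal.ofReal |Real.exp (-(x*t)) - Real.exp (-(y*t))|
        = ENNReal.ofReal (Real.exp (-(x*t)) - Real.exp (-(y*t))) := by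
    intro t ht
    rw [abs_of_nonneg]
    rw [sub_nonneg, Real.exp_le_exp]
    nlinarith [le_of_lt (mem_Ioi.1 ht)]
  rw [setLIntegral_congr_fun measurableSet_Ioi key]
  have hint : IntegrableOn (fun t => Real.exp (-(x*t)) - Real.exp (-(y*t))) (Ioi (0:ℝ)) :=
    (exp_intOn hx).sub (exp_intOn hy)
  rw [← ofReal_integral_eq_lintegral_ofReal hint]
  · rw [integral_sub (exp_intOn hx) (exp_intOn hy), exp_int hx, exp_int hy]
  · refine (ae_restrict_iff' measurableSet_Ioi).2 (ae_of_all _ fun t ht => ?_)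
    rw [Pi.zero_apply, sub_nonneg, Real.exp_le_exp]
    nlinarith [le_of_lt (mem_Ioi.1 ht)]

lemma inner_int_abs {x y : ℝ} (hx : 0 < x) (hy : 0 < y) :
    ∫⁻ t in Ioi (0:ℝ), ENNReal.ofReal |Real.exp (-(x*t)) - Real.exp (-(y*t))|
      = ENNReal.ofReal |1/x - 1/y| := by
  rcases le_total x y with h | h
  · rw [inner_int hx h, abs_of_nonneg (by rw [sub_nonneg]; exact one_div_le_one_div_of_le hx h)]
  · have hcomm : ∀ t : ℝ, |Real.exp (-(x*t)) - Real.exp (-(y*t))|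
        = |Real.exp (-(y*t)) - Real.exp (-(x*t))| := fun t => abs_sub_comm _ _
    simp_rw [hcomm]
    rw [inner_int hy h, abs_sub_comm,
      abs_of_nonneg (by rw [sub_nonneg]; exact one_div_le_one_div_of_le hy h)]

lemma msupp_null {μ : Measure ℝ} {B : Set ℝ} (hB : ∀ x ∈ B, x ∉ msuppR μ) : μ B = 0 := by
  classical
  have key : ∀ x ∈ B, ∃ pq : ℚ × ℚ, x ∈ Ioo (pq.1:ℝ) (pq.2:ℝ) ∧ μ (Ioo (pq.1:ℝ) (pq.2:ℝ)) = 0 := by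
    intro x hx
    have h := hB x hx
    simp only [msuppR, mem_setOf_eq, not_forall] at h
    obtain ⟨U, hU, hU0⟩ := h
    rw [not_not] at hU0
    obtain ⟨δ, hδ, hball⟩ := Metric.mem_nhds_iff.1 hU
    obtain ⟨p, hp1, hp2⟩ := exists_rat_btwn (show x - δ < x by linarith)
    obtain ⟨q, hq1, hq2⟩ := exists_rat_btwn (show x < x + δ by linarith)
    refine ⟨(p, q), ⟨hp2, hq1⟩, measure_mono_null ?_ hU0⟩
    intro z hz
    apply hball
    rw [Real.ball_eq_Ioo]
    exact ⟨by linarith [hz.1], by linarith [hz.2]⟩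
  have hsub : B ⊆ ⋃ pq ∈ {pq : ℚ × ℚ | μ (Ioo (pq.1:ℝ) (pq.2:ℝ)) = 0},
      Ioo (pq.1:ℝ) (pq.2:ℝ) := by
    intro x hx
    obtain ⟨pq, hmem, h0⟩ := key x hx
    exact mem_biUnion h0 hmem
  refine measure_mono_null hsub ?_
  exact (measure_biUnion_null_iff (Set.to_countable _)).2 fun pq hpq => hpq

lemma bdd_integrableOn {μ : Measure ℝ} [IsFiniteMeasure μ] {f : ℝ → ℝ} {S : Set ℝ}
    (hS : MeasurableSet S) (hf : Continuous f) {C : ℝ} (hC : ∀ x ∈ S, |f x| ≤ C) :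
    IntegrableOn f S μ := by
  refine Integrable.mono' (integrable_const C) hf.aestronglyMeasurable ?_
  refine (ae_restrict_iff' hS).2 (ae_of_all _ fun x hx => ?_)
  simpa [Real.norm_eq_abs] using hC x hx

lemma L1Err_nonneg (ε : ℝ) (g : ℝ → ℝ) : 0 ≤ L1Err ε g :=
  integral_nonneg fun t => mul_nonneg (Real.exp_nonneg _) (abs_nonneg _)

set_option maxHeartbeats 1000000 in
theorem statement17 (μ : Measure ℝ) (hfin : IsFiniteMeasure μ) (hμ0 : μ (Set.Iio 0) = 0)
    (n : ℕ) (hn : 0 < n) (ε : ℝ) (hε : 0 ≤ ε)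
    (hok : 0 < ε ∨ ∃ a > (0 : ℝ), μ (Set.Iio a) = 0) :
    sInf {r : ℝ | ∃ ρ : Measure ℝ, Dn n ρ ∧ r = L1Err ε (fun t => Kker μ t - Kker ρ t)} ≤
      (μ Set.univ).toReal / (2 * (sInf (msuppR μ) + ε) * n) := by
  classical
  have hbdd : BddBelow {r : ℝ | ∃ ρ : Measure ℝ, Dn n ρ ∧
      r = L1Err ε (fun t => Kker μ t - Kker ρ t)} := by
    refine ⟨0, fun r hr => ?_⟩
    obtain ⟨ρ, _, rfl⟩ := hr
    exact L1Err_nonneg _ _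
  by_cases hμz : μ = 0
  · subst hμz
    have hmem : (0:ℝ) ∈ {r : ℝ | ∃ ρ : Measure ℝ, Dn n ρ ∧
        r = L1Err ε (fun t => Kker (0:Measure ℝ) t - Kker ρ t)} := by
      refine ⟨0, ⟨fun _ => 0, fun _ => 0, fun _ => le_refl 0, fun _ => le_refl 0, by simp⟩, ?_⟩
      simp [L1Err, Kker]
    have := csInf_le hbdd hmem
    simpa using this
  -- main case
  have hlb : ∀ x ∈ msuppR μ, (0:ℝ) ≤ x := by
    intro x hx
    by_contra hc
    exact hx (Iio 0) (isOpen_Iio.mem_nhds (not_le.1 hc)) hμ0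
  have hne : (msuppR μ).Nonempty := by
    by_contra hc
    rw [not_nonempty_iff_eq_empty] at hc
    exact hμz (Measure.measure_univ_eq_zero.1 (msupp_null fun x _ hx => by simp [hc] at hx))
  have hbddb : BddBelow (msuppR μ) := ⟨0, hlb⟩
  set a := sInf (msuppR μ) with ha_def
  have ha0 : (0:ℝ) ≤ a := le_csInf hne hlb
  have hμa : μ (Iio a) = 0 :=
    msupp_null fun x hx hmem => absurd (csInf_le hbddb hmem) (not_le.2 hx)
  set s := a + ε with hs_def
  have hs : 0 < s := by
    rcases hok with hε' | ⟨b, hb, hμb⟩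
    · have : 0 ≤ a := ha0
      simp only [hs_def]; linarith
    · have hba : b ≤ a := by
        refine le_csInf hne fun x hx => ?_
        by_contra hc
        exact hx (Iio b) (isOpen_Iio.mem_nhds (not_le.1 hc)) hμb
      simp only [hs_def]; linarith
  have hsn : 0 < s * n := by positivity
  -- the partition
  set hh : ℝ := 1/(s*n) with hh_def
  have hhpos : 0 < hh := by positivity
  set A : Fin n → Set ℝ :=
    fun i => {α : ℝ | (α+ε)⁻¹ ∈ Ioc ((i:ℝ)*hh) (((i:ℝ)+1)*hh)} with hA_def
  set y : Fin n → ℝ := fun i => 2*s*n/(2*(i:ℝ)+1) with hy_def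
  have hy_pos : ∀ i, 0 < y i := by
    intro i
    have : (0:ℝ) < 2*(i:ℝ)+1 := by positivity
    simp only [hy_def]
    positivity
  have hy_inv : ∀ i, (y i)⁻¹ = ((i:ℝ)+1/2)*hh := by
    intro i
    have h1 : (0:ℝ) < 2*(i:ℝ)+1 := by positivity
    simp only [hy_def, hh_def]
    field_simp
  have hy_ge : ∀ i, s ≤ y i := by
    intro i
    have h1 : (0:ℝ) < 2*(i:ℝ)+1 := by positivity
    have h2 : (i:ℝ) ≤ (n:ℝ) - 1 := by
      have := i.isLt
      have : ((i:ℕ):ℝ) ≤ (n:ℝ) - 1 := by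
        have h3 : (i:ℕ) + 1 ≤ n := i.isLt
        have h4 : ((i:ℕ):ℝ) + 1 ≤ (n:ℝ) := by exact_mod_cast h3
        linarith
      exact this
    rw [hy_def, le_div_iff₀ h1]
    nlinarith
  have hα_nonneg : ∀ i, 0 ≤ y i - ε := fun i => by
    have := hy_ge i; simp only [hs_def] at this; linarith
  have hA_meas : ∀ i, MeasurableSet (A i) := by
    intro i
    have : A i = (fun α : ℝ => (α+ε)⁻¹) ⁻¹' Ioc ((i:ℝ)*hh) (((i:ℝ)+1)*hh) := rfl
    rw [this]
    exact ((measurable_id.add_const ε).inv) measurableSet_Ioc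
  have hA_mem : ∀ i, ∀ α ∈ A i, 0 < α + ε ∧ s ≤ α + ε ∧
      (α+ε)⁻¹ ∈ Ioc ((i:ℝ)*hh) (((i:ℝ)+1)*hh) := by
    intro i α hα
    have hmem : (α+ε)⁻¹ ∈ Ioc ((i:ℝ)*hh) (((i:ℝ)+1)*hh) := hα
    have hpos_inv : 0 < (α+ε)⁻¹ :=
      lt_of_le_of_lt (by positivity : (0:ℝ) ≤ (i:ℝ)*hh) hmem.1
    have hpos : 0 < α + ε := by
      by_contra hc
      push_neg at hc
      have : (α+ε)⁻¹ ≤ 0 := inv_nonpos.2 hc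
      linarith
    refine ⟨hpos, ?_, hmem⟩
    have hle : (α+ε)⁻¹ ≤ 1/s := by
      refine le_trans hmem.2 ?_
      have h4 : ((i:ℝ)+1) ≤ (n:ℝ) := by exact_mod_cast i.isLt
      rw [hh_def, mul_one_div, div_le_div_iff₀ (by positivity) hs]
      nlinarith
    rw [one_div] at hle
    exact (inv_le_inv₀ hpos hs).1 hle
  have hA_disj : Pairwise (Function.onFun Disjoint A) := by
    have key : ∀ i j : Fin n, (i:ℕ) < (j:ℕ) → Disjoint (A i) (A j) := by
      intro i j hij
      rw [Set.disjoint_left]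
      intro α hαi hαj
      have h1 := (hA_mem i α hαi).2.2
      have h2 := (hA_mem j α hαj).2.2
      have hij' : ((i:ℕ):ℝ) + 1 ≤ ((j:ℕ):ℝ) := by exact_mod_cast hij
      have := h1.2
      have := h2.1
      nlinarith [hhpos]
    intro i j hij
    rcases lt_or_gt_of_ne (fun hc => hij (by exact_mod_cast Fin.ext hc : i = j)) with h | h
    · exact key i j h
    · exact (key j i h).symm
  have hcover : Ici a ⊆ ⋃ i, A i := by
    intro α hα
    have hαε : s ≤ α + ε := by
      simp only [hs_def]
      have : a ≤ α := hα
      linarith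
    have hαpos : 0 < α + ε := lt_of_lt_of_le hs hαε
    set u := (α+ε)⁻¹ with hu_def
    have hupos : 0 < u := inv_pos.2 hαpos
    have hule : u ≤ (n:ℝ) * hh := by
      have h1 : u ≤ s⁻¹ := (inv_le_inv₀ hαpos hs).2 hαε
      rw [hh_def, mul_one_div]
      rw [le_div_iff₀ hsn]
      calc u * (s * n) ≤ s⁻¹ * (s * n) := by
            exact mul_le_mul_of_nonneg_right h1 hsn.le
        _ = n := by field_simp
    set k := ⌈u / hh⌉₊ with hk_def
    have hk1 : 1 ≤ k := by
      rw [hk_def, Nat.one_le_ceil_iff]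
      positivity
    have hkn : k ≤ n := by
      rw [hk_def, Nat.ceil_le, div_le_iff₀ hhpos]
      linarith [hule]
    refine mem_iUnion.2 ⟨⟨k - 1, by omega⟩, ?_⟩
    have hcast : ((k - 1 : ℕ):ℝ) = (k:ℝ) - 1 := by
      rw [Nat.cast_sub hk1, Nat.cast_one]
    constructor
    · show ((k-1:ℕ):ℝ) * hh < u
      rw [hcast]
      have : ((k:ℝ) - 1) < u / hh := by
        have h2 : (k - 1 : ℕ) < k := by omega
        have := Nat.lt_ceil.1 (lt_of_lt_of_le (Nat.lt_succ_self (k-1)) (by omega : (k-1)+1 ≤ k))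
        -- fallback below
        have h3 : ((k:ℝ) - 1) < u / hh := by
          by_contra hc
          push_neg at hc
          have : k - 1 < k := by omega
          have h4 : (k:ℕ) ≤ k - 1 := by
            rw [hk_def]
            apply Nat.ceil_le.2
            rw [← hcast] at hc
            exact hc
          omega
        exact h3
      calc ((k:ℝ) - 1) * hh < (u / hh) * hh := by
            exact mul_lt_mul_of_pos_right this hhpos
        _ = u := by field_simp
    · show u ≤ (((k-1:ℕ):ℝ) + 1) * hh
      rw [hcast]
      have h1 : u / hh ≤ (k:ℝ) := Nat.le_ceil _
      calc u = (u / hh) * hh := by field_simp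
        _ ≤ (k:ℝ) * hh := mul_le_mul_of_nonneg_right h1 hhpos.le
        _ = ((k:ℝ) - 1 + 1) * hh := by ring
  have hcompl : μ ((⋃ i, A i)ᶜ) = 0 := by
    refine measure_mono_null ?_ hμa
    intro x hx
    rw [mem_compl_iff] at hx
    by_contra hc
    exact hx (hcover (show a ≤ x from not_lt.1 fun hcc => hc hcc))
  have hsne : s ≠ 0 := hs.ne'
  have hnne : (n:ℝ) ≠ 0 := Nat.cast_ne_zero.2 hn.ne'
  -- the discrete measure
  set β : Fin n → ℝ := fun i => (μ (A i)).toReal with hβ_def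
  set αv : Fin n → ℝ := fun i => y i - ε with hαv_def
  set ρ : Measure ℝ := ∑ i : Fin n, ENNReal.ofReal (β i) • Measure.dirac (αv i) with hρ_def
  have hDn : Dn n ρ := ⟨β, αv, fun i => ENNReal.toReal_nonneg, hα_nonneg, rfl⟩
  refine le_trans (csInf_le hbdd ⟨ρ, hDn, rfl⟩) ?_
  -- compute Kker ρ
  have hdint : ∀ (t:ℝ) (i : Fin n), Integrable (fun α : ℝ => Real.exp (-α * t))
      (ENNReal.ofReal (β i) • Measure.dirac (αv i)) := by
    intro t i
    refine Integrable.smul_measure ?_ ENNReal.ofReal_ne_top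
    have h := ae_eq_dirac (a := αv i) (fun α : ℝ => Real.exp (-α * t))
    exact (integrable_const (Real.exp (-(αv i) * t))).congr h.symm
  have hKρ_eq : ∀ t : ℝ, Kker ρ t = ∑ i : Fin n, β i * Real.exp (-(αv i) * t) := by
    intro t
    rw [Kker, hρ_def, integral_finset_sum_measure (fun i _ => hdint t i)]
    refine Finset.sum_congr rfl fun i _ => ?_
    rw [integral_smul_measure, integral_dirac, ENNReal.toReal_ofReal ENNReal.toReal_nonneg,
      smul_eq_mul]
  have hKμ_meas : StronglyMeasurable (Kker μ) := by
    have hc : Continuous (fun p : ℝ × ℝ => Real.exp (-p.2 * p.1)) :=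
      Real.continuous_exp.comp ((continuous_snd.neg).mul continuous_fst)
    exact hc.stronglyMeasurable.integral_prod_right'
  have hKρ_cont : Continuous (Kker ρ) := by
    rw [show Kker ρ = fun t => ∑ i : Fin n, β i * Real.exp (-(αv i)*t) from funext hKρ_eq]
    refine continuous_finset_sum _ fun i _ => ?_
    exact continuous_const.mul (Real.continuous_exp.comp (continuous_const.mul continuous_id))
  have hD_meas : AEStronglyMeasurable (fun t => Real.exp (-(ε*t)) * |Kker μ t - Kker ρ t|)
      (volume.restrict (Ioi (0:ℝ))) := by
    refine Measurable.aestronglyMeasurable ?_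
    exact (Real.measurable_exp.comp ((measurable_const.mul measurable_id).neg)).mul
      ((hKμ_meas.measurable.sub hKρ_cont.measurable).abs)
  have hL1 : L1Err ε (fun t => Kker μ t - Kker ρ t)
      = (∫⁻ t in Ioi (0:ℝ),
          ENNReal.ofReal (Real.exp (-(ε*t)) * |Kker μ t - Kker ρ t|)).toReal := by
    rw [L1Err, integral_eq_lintegral_of_nonneg_ae
      (ae_of_all _ fun t => mul_nonneg (Real.exp_nonneg _) (abs_nonneg _)) hD_meas]
  -- key pointwise bound
  have key : ∀ t ∈ Ioi (0:ℝ), ENNReal.ofReal (Real.exp (-(ε*t)) * |Kker μ t - Kker ρ t|)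
      ≤ ∑ i : Fin n, ∫⁻ α in A i,
          ENNReal.ofReal |Real.exp (-((α+ε)*t)) - Real.exp (-(y i * t))| ∂μ := by
    intro t ht
    have ht0 : (0:ℝ) < t := ht
    have hbound : ∀ i : Fin n, ∀ α ∈ A i, |Real.exp (-α * t)| ≤ 1 := by
      intro i α hα
      have h1 := (hA_mem i α hα).2.1
      rw [hs_def] at h1
      have hα0 : 0 ≤ α := by linarith
      rw [abs_of_nonneg (Real.exp_nonneg _)]
      have hneg : -α * t ≤ 0 := by nlinarith
      exact le_trans (Real.exp_le_exp.2 hneg) (le_of_eq Real.exp_zero)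
    have hcont1 : Continuous (fun α : ℝ => Real.exp (-α * t)) :=
      Real.continuous_exp.comp ((continuous_id.neg).mul continuous_const)
    have hIi : ∀ i : Fin n, IntegrableOn (fun α => Real.exp (-α * t)) (A i) μ := fun i =>
      bdd_integrableOn (hA_meas i) hcont1 (C := 1) (hbound i)
    have hIU : IntegrableOn (fun α => Real.exp (-α * t)) (⋃ i, A i) μ := by
      refine bdd_integrableOn (MeasurableSet.iUnion hA_meas) hcont1 (C := 1) ?_
      intro α hα
      obtain ⟨i, hi⟩ := mem_iUnion.1 hα
      exact hbound i α hi
    have hres : μ.restrict (⋃ i, A i) = μ :=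
      Measure.restrict_eq_self_of_ae_mem (by rw [ae_iff]; exact hcompl)
    have hKμ_t : Kker μ t = ∑ i : Fin n, ∫ α in A i, Real.exp (-α * t) ∂μ := by
      calc Kker μ t = ∫ α in ⋃ i, A i, Real.exp (-α * t) ∂μ := by rw [Kker, hres]
        _ = ∑' i, ∫ α in A i, Real.exp (-α * t) ∂μ := integral_iUnion hA_meas hA_disj hIU
        _ = ∑ i : Fin n, ∫ α in A i, Real.exp (-α * t) ∂μ := tsum_fintype _
    have hKρ_t : Kker ρ t = ∑ i : Fin n, ∫ _ in A i, Real.exp (-(αv i) * t) ∂μ := by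
      rw [hKρ_eq t]
      refine Finset.sum_congr rfl fun i _ => ?_
      rw [setIntegral_const, smul_eq_mul]
      rfl
    have hD_t : Kker μ t - Kker ρ t
        = ∑ i : Fin n, ∫ α in A i, (Real.exp (-α*t) - Real.exp (-(αv i)*t)) ∂μ := by
      rw [hKμ_t, hKρ_t, ← Finset.sum_sub_distrib]
      refine Finset.sum_congr rfl fun i _ => ?_
      rw [integral_sub (hIi i) (integrableOn_const (measure_ne_top _ _))]
    have hconv : ∀ i : Fin n, ∀ α ∈ A i,
        Real.exp (-(ε*t)) * |Real.exp (-α*t) - Real.exp (-(αv i)*t)|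
          = |Real.exp (-((α+ε)*t)) - Real.exp (-(y i * t))| := by
      intro i α _
      have e1 : Real.exp (-(ε*t)) * Real.exp (-α*t) = Real.exp (-((α+ε)*t)) := by
        rw [← Real.exp_add]; congr 1; ring
      have e2 : Real.exp (-(ε*t)) * Real.exp (-(αv i)*t) = Real.exp (-(y i * t)) := by
        rw [← Real.exp_add]; congr 1; simp only [hαv_def]; ring
      rw [← e1, ← e2, ← mul_sub, abs_mul, abs_of_nonneg (Real.exp_nonneg _)]
    have hreal : Real.exp (-(ε*t)) * |Kker μ t - Kker ρ t|
        ≤ ∑ i : Fin n, ∫ α in A i,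
            |Real.exp (-((α+ε)*t)) - Real.exp (-(y i * t))| ∂μ := by
      rw [hD_t]
      calc Real.exp (-(ε*t)) * |∑ i : Fin n, ∫ α in A i,
              (Real.exp (-α*t) - Real.exp (-(αv i)*t)) ∂μ|
          ≤ Real.exp (-(ε*t)) * ∑ i : Fin n, ∫ α in A i,
              |Real.exp (-α*t) - Real.exp (-(αv i)*t)| ∂μ := by
            refine mul_le_mul_of_nonneg_left ?_ (Real.exp_nonneg _)
            refine le_trans (Finset.abs_sum_le_sum_abs _ _) (Finset.sum_le_sum fun i _ => ?_)
            simpa [Real.norm_eq_abs] using norm_integral_le_integral_norm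
              (μ := μ.restrict (A i)) (fun α => Real.exp (-α*t) - Real.exp (-(αv i)*t))
        _ = ∑ i : Fin n, Real.exp (-(ε*t)) * ∫ α in A i,
              |Real.exp (-α*t) - Real.exp (-(αv i)*t)| ∂μ := Finset.mul_sum _ _ _
        _ = ∑ i : Fin n, ∫ α in A i,
              |Real.exp (-((α+ε)*t)) - Real.exp (-(y i * t))| ∂μ := by
            refine Finset.sum_congr rfl fun i _ => ?_
            rw [← integral_const_mul]
            exact setIntegral_congr_fun (hA_meas i) fun α hα => hconv i α hα
    have hIabs : ∀ i : Fin n, IntegrableOn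
        (fun α => |Real.exp (-((α+ε)*t)) - Real.exp (-(y i * t))|) (A i) μ := by
      intro i
      have hcont2 : Continuous (fun α : ℝ =>
          |Real.exp (-((α+ε)*t)) - Real.exp (-(y i * t))|) :=
        ((Real.continuous_exp.comp
          (((continuous_id.add continuous_const).mul continuous_const).neg)).sub
          continuous_const).abs
      refine bdd_integrableOn (hA_meas i) hcont2 (C := 2) ?_
      intro α hα
      have h1 : (0:ℝ) < α + ε := (hA_mem i α hα).1
      have h2 : Real.exp (-((α+ε)*t)) ≤ 1 := by
        refine le_trans (Real.exp_le_exp.2 ?_) (le_of_eq Real.exp_zero)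
        nlinarith
      have h3 : Real.exp (-(y i * t)) ≤ 1 := by
        refine le_trans (Real.exp_le_exp.2 ?_) (le_of_eq Real.exp_zero)
        nlinarith [hy_pos i]
      rw [abs_abs, abs_sub_le_iff]
      constructor
      · nlinarith [Real.exp_nonneg (-(y i * t))]
      · nlinarith [Real.exp_nonneg (-((α+ε)*t))]
    calc ENNReal.ofReal (Real.exp (-(ε*t)) * |Kker μ t - Kker ρ t|)
        ≤ ENNReal.ofReal (∑ i : Fin n, ∫ α in A i,
            |Real.exp (-((α+ε)*t)) - Real.exp (-(y i * t))| ∂μ) :=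
          ENNReal.ofReal_le_ofReal hreal
      _ = ∑ i : Fin n, ENNReal.ofReal (∫ α in A i,
            |Real.exp (-((α+ε)*t)) - Real.exp (-(y i * t))| ∂μ) :=
          ENNReal.ofReal_sum_of_nonneg fun i _ => integral_nonneg fun α => abs_nonneg _
      _ = ∑ i : Fin n, ∫⁻ α in A i,
            ENNReal.ofReal |Real.exp (-((α+ε)*t)) - Real.exp (-(y i * t))| ∂μ := by
          refine Finset.sum_congr rfl fun i _ => ?_
          exact ofReal_integral_eq_lintegral_ofReal (hIabs i)
            (ae_of_all _ fun α => abs_nonneg _)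
  -- global chain
  have hGmeas : ∀ i : Fin n, Measurable (Function.uncurry fun (t α : ℝ) =>
      ENNReal.ofReal |Real.exp (-((α+ε)*t)) - Real.exp (-(y i*t))|) := by
    intro i
    apply Measurable.ennreal_ofReal
    apply Continuous.measurable
    exact ((Real.continuous_exp.comp
        (((continuous_snd.add continuous_const).mul continuous_fst).neg)).sub
      (Real.continuous_exp.comp ((continuous_const.mul continuous_fst).neg))).abs
  have hmono : (∫⁻ t in Ioi (0:ℝ),
      ENNReal.ofReal (Real.exp (-(ε*t)) * |Kker μ t - Kker ρ t|))
      ≤ ENNReal.ofReal (1/(2*s*(n:ℝ))) * μ univ := by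
    have step1 := lintegral_mono_ae (μ := volume.restrict (Ioi (0:ℝ)))
      (((ae_restrict_mem (μ := volume) measurableSet_Ioi)).mono key)
    refine le_trans step1 ?_
    rw [lintegral_finset_sum _ (fun i _ => (hGmeas i).lintegral_prod_right)]
    have swap : ∀ i : Fin n,
        (∫⁻ t in Ioi (0:ℝ), ∫⁻ α in A i,
          ENNReal.ofReal |Real.exp (-((α+ε)*t)) - Real.exp (-(y i * t))| ∂μ)
        = ∫⁻ α in A i, (∫⁻ t in Ioi (0:ℝ),
          ENNReal.ofReal |Real.exp (-((α+ε)*t)) - Real.exp (-(y i * t))|) ∂μ :=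
      fun i => lintegral_lintegral_swap (hGmeas i).aemeasurable
    have per_i : ∀ i : Fin n, (∫⁻ α in A i, (∫⁻ t in Ioi (0:ℝ),
        ENNReal.ofReal |Real.exp (-((α+ε)*t)) - Real.exp (-(y i * t))|) ∂μ)
        ≤ ENNReal.ofReal (1/(2*s*(n:ℝ))) * μ (A i) := by
      intro i
      have hval : ∀ α ∈ A i, (∫⁻ t in Ioi (0:ℝ),
          ENNReal.ofReal |Real.exp (-((α+ε)*t)) - Real.exp (-(y i * t))|)
          = ENNReal.ofReal |1/(α+ε) - 1/(y i)| :=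
        fun α hα => inner_int_abs (hA_mem i α hα).1 (hy_pos i)
      rw [setLIntegral_congr_fun (hA_meas i) hval]
      have hb : ∀ α ∈ A i, ENNReal.ofReal |1/(α+ε) - 1/(y i)|
          ≤ ENNReal.ofReal (1/(2*s*(n:ℝ))) := by
        intro α hα
        refine ENNReal.ofReal_le_ofReal ?_
        have hm := (hA_mem i α hα).2.2
        have heq : 1/(2*s*(n:ℝ)) = hh/2 := by rw [hh_def]; field_simp
        rw [one_div, one_div, hy_inv i, heq, abs_le]
        exact ⟨by nlinarith [hm.1, hhpos], by nlinarith [hm.2, hhpos]⟩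
      calc (∫⁻ α in A i, ENNReal.ofReal |1/(α+ε) - 1/(y i)| ∂μ)
          ≤ ∫⁻ _ in A i, ENNReal.ofReal (1/(2*s*(n:ℝ))) ∂μ := setLIntegral_mono' (hA_meas i) hb
        _ = ENNReal.ofReal (1/(2*s*(n:ℝ))) * μ (A i) := setLIntegral_const _ _
    calc (∑ i : Fin n, ∫⁻ t in Ioi (0:ℝ), ∫⁻ α in A i,
            ENNReal.ofReal |Real.exp (-((α+ε)*t)) - Real.exp (-(y i * t))| ∂μ)
        ≤ ∑ i : Fin n, ENNReal.ofReal (1/(2*s*(n:ℝ))) * μ (A i) :=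
          Finset.sum_le_sum fun i _ => le_of_le_of_eq (le_of_eq (swap i)) (by rfl) |>.trans (per_i i)
      _ = ENNReal.ofReal (1/(2*s*(n:ℝ))) * ∑ i : Fin n, μ (A i) := (Finset.mul_sum _ _ _).symm
      _ = ENNReal.ofReal (1/(2*s*(n:ℝ))) * μ (⋃ i, A i) := by
          rw [measure_iUnion hA_disj hA_meas, tsum_fintype]
      _ ≤ ENNReal.ofReal (1/(2*s*(n:ℝ))) * μ univ :=
          mul_le_mul' le_rfl (measure_mono (subset_univ _))
  have hfin2 : ENNReal.ofReal (1/(2*s*(n:ℝ))) * μ univ ≠ ∞ :=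
    ENNReal.mul_ne_top ENNReal.ofReal_ne_top (measure_ne_top μ _)
  rw [hL1]
  calc (∫⁻ t in Ioi (0:ℝ),
        ENNReal.ofReal (Real.exp (-(ε*t)) * |Kker μ t - Kker ρ t|)).toReal
      ≤ (ENNReal.ofReal (1/(2*s*(n:ℝ))) * μ univ).toReal := ENNReal.toReal_mono hfin2 hmono
    _ = 1/(2*s*(n:ℝ)) * (μ univ).toReal := by
        rw [ENNReal.toReal_mul, ENNReal.toReal_ofReal (by positivity)]
    _ = (μ univ).toReal / (2*s*(n:ℝ)) := by ring
end
end
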